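/- arXiv:0705.4306 — 6 statements merged into one kernel-verified Lean document; each statement's English description precedes it below -/
import Mathlib

section
/- For x > 0, define ς(x) = (1/(2πi)) ∫_{(1)} x^s exp(s²/4) ds/s (integral over the vertical line Re(s)=1). Then ς(x) = (1/√π) ∫_{-∞}^{log x} exp(-y²) dy. -/
open Complex MeasureTheory Set Filter

lemma aux_inv_eq_integral (c : ℂ) (hc : 0 < c.re) :
    ∫ v in Set.Ioi (0:ℝ), Complex.exp (-(c * v)) = 1 / c := by
  have hc0 : c ≠ 0 := fun h => by simp [h] at hc
  have hderiv : ∀ v ∈ Set.Ici (0:ℝ),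
      HasDerivAt (fun v : ℝ => -Complex.exp (-(c * v)) / c) (Complex.exp (-(c * v))) v := by
    intro v _
    have h2 : HasDerivAt (fun z : ℂ => -(c * z)) (-c) (v : ℂ) := by
      exact ((hasDerivAt_id (v:ℂ)).const_mul c).neg.congr_deriv (by simp)
    have h1 : HasDerivAt (fun z : ℂ => Complex.exp (-(c * z)))
        (Complex.exp (-(c * v)) * -c) (v : ℂ) := h2.cexp
    have h3 := ((h1.comp_ofReal).neg).div_const c
    convert h3 using 1
    all_goals (try rfl)
    all_goals (try field_simp)
  have hint : IntegrableOn (fun v : ℝ => Complex.exp (-(c * v))) (Set.Ioi 0) := by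
    apply Integrable.mono' ((exp_neg_integrableOn_Ioi 0 hc).mono_set subset_rfl)
    · exact (Continuous.aestronglyMeasurable (by continuity)).restrict
    · filter_upwards with v
      rw [Complex.norm_exp]
      simp [neg_mul]
  have htend : Tendsto (fun v : ℝ => -Complex.exp (-(c * v)) / c) atTop (nhds 0) := by
    rw [tendsto_zero_iff_norm_tendsto_zero]
    have : (fun v : ℝ => ‖-Complex.exp (-(c * v)) / c‖)
        = fun v : ℝ => Real.exp (-(c.re * v)) / ‖c‖ := by
      ext v
      rw [norm_div, norm_neg, Complex.norm_exp]
      simp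
    rw [this]
    have h4 : Tendsto (fun v : ℝ => -(c.re * v)) atTop atBot :=
      tendsto_neg_atBot_iff.mpr ((tendsto_const_mul_atTop_of_pos hc).mpr tendsto_id)
    simpa using (Real.tendsto_exp_atBot.comp h4).div_const ‖c‖
  have := integral_Ioi_of_hasDerivAt_of_tendsto'
      (f := fun v : ℝ => -Complex.exp (-(c * v)) / c) hderiv hint htend
  rw [this]
  simp [neg_div]

lemma aux_gauss (w : ℝ) :
    ∫ t : ℝ, Complex.exp (((1:ℂ) + t * I) * w + ((1:ℂ) + t * I)^2 / 4)
      = 2 * Real.sqrt Real.pi * Complex.exp (-(w:ℂ)^2) := by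
  have hb : (-(1/4) : ℂ).re < 0 := by norm_num
  have h := integral_cexp_quadratic hb (I * (w + 1/2)) (w + 1/4)
  have heq : ∀ t : ℝ, ((1:ℂ) + t * I) * w + ((1:ℂ) + t * I)^2 / 4
      = (-(1/4)) * (t:ℂ)^2 + (I * (w + 1/2)) * t + (w + 1/4) := by
    intro t
    linear_combination ((t:ℂ)^2/4) * Complex.I_sq
  simp_rw [heq]
  rw [h]
  have h1 : ((Real.pi :ℂ) / -(-(1/4))) = ((4*Real.pi : ℝ) : ℂ) := by push_cast; ring
  have h2 : ((w:ℂ) + 1/4 - (I * (w + 1/2))^2 / (4 * (-(1/4)))) = -(w:ℂ)^2 := by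
    linear_combination ((w:ℂ)+1/2)^2 * Complex.I_sq
  rw [h1, h2]
  congr 1
  rw [show ((1:ℂ)/2) = ((1/2 : ℝ) : ℂ) by norm_num,
    ← Complex.ofReal_cpow (by positivity) (1/2 : ℝ)]
  rw [show ((4*Real.pi) ^ (1/2:ℝ)) = Real.sqrt (4*Real.pi) by
    rw [Real.sqrt_eq_rpow]]
  rw [Real.sqrt_mul (by norm_num) Real.pi,
    show Real.sqrt 4 = 2 by rw [show (4:ℝ) = 2^2 by norm_num, Real.sqrt_sq (by norm_num)]]
  push_cast
  ring

lemma aux_sub (u : ℝ) : ∫ v in Set.Ioi (0:ℝ), Real.exp (-(u-v)^2)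
    = ∫ y in Set.Iio u, Real.exp (-y^2) := by
  have h1 : ∀ v : ℝ, Real.exp (-(u-v)^2) = (fun z => Real.exp (-(u+z)^2)) (-v) := by
    intro v; simp only; ring_nf
  simp_rw [h1]
  rw [show (∫ (v : ℝ) in Ioi 0, Real.exp (-(u + -v) ^ 2))
      = ∫ z in Iic (-(0:ℝ)), Real.exp (-(u+z)^2) from
    integral_comp_neg_Ioi 0 (fun z => Real.exp (-(u+z)^2)), neg_zero,
    ← integral_Iic_eq_integral_Iio (x := u)]
  have := (measurePreserving_add_right (volume : Measure ℝ) u).setIntegral_preimage_emb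
      ((Homeomorph.addRight u).isClosedEmbedding.measurableEmbedding)
      (fun y => Real.exp (-y^2)) (Set.Iic u)
  rw [Set.preimage_add_const_Iic, sub_self] at this
  rw [← this]
  congr 1 with z
  ring_nf

lemma aux_norm (u t v : ℝ) :
    ‖Complex.exp (((1:ℂ) + t * I) * ((u:ℂ) - v) + ((1:ℂ) + t * I)^2 / 4)‖
      = (Real.exp (u + 1/4) * Real.exp (-(1/4) * t^2)) * Real.exp (-1 * v) := by
  have harg : ((1:ℂ) + t * I) * ((u:ℂ) - v) + ((1:ℂ) + t * I)^2 / 4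
      = ((u - v + (1 - t^2)/4 : ℝ) : ℂ) + ((t*(u-v) + t/2 : ℝ) : ℂ) * I := by
    push_cast
    linear_combination ((t:ℂ)^2/4) * Complex.I_sq
  rw [harg, Complex.norm_exp]
  simp only [Complex.add_re, Complex.ofReal_re, Complex.mul_re, Complex.I_re, Complex.I_im,
    Complex.ofReal_im, mul_zero, zero_mul, sub_zero, mul_one]
  rw [← Real.exp_add, ← Real.exp_add]
  ring_nf

lemma aux_fubini (u : ℝ) :
    Integrable (Function.uncurry fun (t v : ℝ) =>
        Complex.exp (((1:ℂ) + t * I) * ((u:ℂ) - v) + ((1:ℂ) + t * I)^2 / 4))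
      ((volume : Measure ℝ).prod ((volume : Measure ℝ).restrict (Set.Ioi 0))) := by
  have hF : Integrable (fun t : ℝ => Real.exp (u + 1/4) * Real.exp (-(1/4) * t^2)) volume :=
    (integrable_exp_neg_mul_sq (by norm_num : (0:ℝ) < 1/4)).const_mul _
  have hG : Integrable (fun v : ℝ => Real.exp (-1 * v))
      ((volume : Measure ℝ).restrict (Set.Ioi 0)) := exp_neg_integrableOn_Ioi 0 one_pos
  apply Integrable.mono' (hF.mul_prod hG)
  · apply Continuous.aestronglyMeasurable
    apply Continuous.cexp
    fun_prop
  · filter_upwards with p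
    rw [Function.uncurry]
    exact le_of_eq (aux_norm u p.1 p.2)

/-- For `x > 0`, the contour integral `(1/(2πi)) ∫_{(1)} x^s exp(s²/4) ds/s` over the
vertical line `Re(s) = 1` (parametrized as `s = 1 + it`, `ds = i dt`, so the factor `i`
cancels with the `i` in `2πi`) equals `(1/√π) ∫_{-∞}^{log x} exp(-y²) dy`. -/
theorem stmt_0 (x : ℝ) (hx : 0 < x) :
    (1 / (2 * Real.pi) : ℂ) *
        ∫ t : ℝ, (x : ℂ) ^ ((1 : ℂ) + t * Complex.I) *
          Complex.exp (((1 : ℂ) + t * Complex.I) ^ 2 / 4) / ((1 : ℂ) + t * Complex.I)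
      = (((Real.sqrt Real.pi)⁻¹ *
          ∫ y in Set.Iio (Real.log x), Real.exp (-y ^ 2) : ℝ) : ℂ) := by
  have hx0 : (x:ℂ) ≠ 0 := Complex.ofReal_ne_zero.mpr hx.ne'
  set u := Real.log x with hu
  have step1 : ∀ t : ℝ, (x : ℂ) ^ ((1 : ℂ) + t * Complex.I) *
          Complex.exp (((1 : ℂ) + t * Complex.I) ^ 2 / 4) / ((1 : ℂ) + t * Complex.I)
      = ∫ v in Set.Ioi (0:ℝ),
          Complex.exp (((1:ℂ) + t*I) * ((u:ℂ) - v) + ((1:ℂ)+t*I)^2/4) := by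
    intro t
    have hre : (0:ℝ) < ((1:ℂ) + t * I).re := by simp
    have hxs : (x:ℂ) ^ ((1:ℂ) + t*I) = Complex.exp ((u:ℂ) * ((1:ℂ)+t*I)) := by
      rw [Complex.cpow_def_of_ne_zero hx0, ← Complex.ofReal_log hx.le]
    rw [hxs, ← Complex.exp_add, div_eq_mul_inv, ← one_div,
      ← aux_inv_eq_integral _ hre, ← integral_const_mul]
    refine setIntegral_congr_fun measurableSet_Ioi (fun v _ => ?_)
    rw [← Complex.exp_add]
    congr 1
    ring
  calc (1 / (2 * Real.pi) : ℂ) *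
        ∫ t : ℝ, (x : ℂ) ^ ((1 : ℂ) + t * Complex.I) *
          Complex.exp (((1 : ℂ) + t * Complex.I) ^ 2 / 4) / ((1 : ℂ) + t * Complex.I)
      = (1 / (2 * Real.pi) : ℂ) * ∫ t : ℝ, ∫ v in Set.Ioi (0:ℝ),
          Complex.exp (((1:ℂ) + t*I) * ((u:ℂ) - v) + ((1:ℂ)+t*I)^2/4) := by
        simp_rw [step1]
    _ = (1 / (2 * Real.pi) : ℂ) * ∫ v in Set.Ioi (0:ℝ), ∫ t : ℝ,
          Complex.exp (((1:ℂ) + t*I) * ((u:ℂ) - v) + ((1:ℂ)+t*I)^2/4) := by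
        rw [integral_integral_swap (aux_fubini u)]
    _ = (1 / (2 * Real.pi) : ℂ) * ∫ v in Set.Ioi (0:ℝ),
          ((2 * Real.sqrt Real.pi : ℝ) : ℂ) * ((Real.exp (-(u - v)^2) : ℝ) : ℂ) := by
        congr 1
        refine setIntegral_congr_fun measurableSet_Ioi (fun v _ => ?_)
        have h1 : ∀ t : ℝ, ((1:ℂ) + t*I) * ((u:ℂ) - v) + ((1:ℂ)+t*I)^2/4
            = ((1:ℂ) + t*I) * ((u - v : ℝ) : ℂ) + ((1:ℂ)+t*I)^2/4 := by
          intro t; push_cast; ring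
        simp_rw [h1, aux_gauss (u - v)]
        rw [Complex.ofReal_exp]
        push_cast
        ring
    _ = (1 / (2 * Real.pi) : ℂ) * (((2 * Real.sqrt Real.pi : ℝ) : ℂ) *
          ((∫ v in Set.Ioi (0:ℝ), Real.exp (-(u - v)^2) : ℝ) : ℂ)) := by
        rw [integral_const_mul,
          show (∫ (a : ℝ) in Set.Ioi (0:ℝ), ((Real.exp (-(u - a) ^ 2) : ℝ) : ℂ))
            = ((∫ (v : ℝ) in Set.Ioi (0:ℝ), Real.exp (-(u - v) ^ 2) : ℝ) : ℂ) from
          integral_ofReal]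
    _ = ((((1/(2*Real.pi) * (2*Real.sqrt Real.pi)) *
          ∫ v in Set.Ioi (0:ℝ), Real.exp (-(u - v)^2) : ℝ)) : ℂ) := by
        push_cast; ring
    _ = (((Real.sqrt Real.pi)⁻¹ * ∫ y in Set.Iio u, Real.exp (-y ^ 2) : ℝ) : ℂ) := by
        have hπ : Real.sqrt Real.pi ≠ 0 := Real.sqrt_ne_zero'.mpr Real.pi_pos
        have h : (1:ℝ)/(2*Real.pi) * (2*Real.sqrt Real.pi) = (Real.sqrt Real.pi)⁻¹ := by
          rw [show (2*Real.pi) = 2*(Real.sqrt Real.pi * Real.sqrt Real.pi) from by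
            rw [Real.mul_self_sqrt Real.pi_pos.le]]
          field_simp
        exact congrArg Complex.ofReal (by rw [aux_sub u, h])
end

section
/- Let A = 4d²δ^{1-d}∫_0^1(1+δ-x²)^d dx + 2dδ², and g₂(x) = 2d(Aδ)^{-1}(1+δ-x²)^{-d} ∫_0^x (1+δ-y²)^d dy. Then g₂ satisfies (g₂'ϖ₁)' − g₂ϖ₂ = 0 on [-1,1], and for every f ∈ C¹[-1,1], ⟨f, g₂⟩ = f(1) − f(-1). -/
open MeasureTheory

set_option maxHeartbeats 1000000 in
/-- With `A = 4d²δ^{1-d}∫_0^1(1+δ-x²)^d dx + 2dδ²` and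
`g₂(x) = 2d(Aδ)⁻¹(1+δ-x²)^{-d} ∫_0^x (1+δ-y²)^d dy`, the function `g₂` satisfies
`(g₂'ϖ₁)' − g₂ϖ₂ = 0` on `[-1,1]`, and `⟨f, g₂⟩ = f(1) − f(-1)` for every `f ∈ C¹[-1,1]`. -/
theorem stmt_6 (δ : ℝ) (hδ : 0 < δ) (d : ℤ) (hd : 2 ≤ d)
    (ϖ₁ ϖ₂ g₂ : ℝ → ℝ) (A : ℝ)
    (hϖ₁ : ∀ x, ϖ₁ x = δ ^ (3 - d) * (1 + δ - x ^ 2) ^ d)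
    (hϖ₂ : ∀ x, ϖ₂ x = 2 * (d : ℝ) * δ ^ (3 - d) * (1 + δ + x ^ 2) * (1 + δ - x ^ 2) ^ (d - 2))
    (hA : A = 4 * (d : ℝ) ^ 2 * δ ^ (1 - d) * (∫ x in (0:ℝ)..1, (1 + δ - x ^ 2) ^ d)
        + 2 * (d : ℝ) * δ ^ 2)
    (hg₂ : ∀ x, g₂ x = 2 * (d : ℝ) * (A * δ)⁻¹ * (1 + δ - x ^ 2) ^ (-d) *
        ∫ y in (0:ℝ)..x, (1 + δ - y ^ 2) ^ d) :
    (∀ x ∈ Set.Icc (-1 : ℝ) 1,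
        HasDerivAt (fun y => deriv g₂ y * ϖ₁ y) (g₂ x * ϖ₂ x) x) ∧
    (∀ f f' : ℝ → ℂ,
      (∀ x ∈ Set.Icc (-1 : ℝ) 1, HasDerivWithinAt f (f' x) (Set.Icc (-1 : ℝ) 1) x) →
      ContinuousOn f' (Set.Icc (-1 : ℝ) 1) →
      (∫ x in (-1 : ℝ)..1,
          (f' x * (starRingEnd ℂ) ((deriv g₂ x : ℝ) : ℂ) * ((ϖ₁ x : ℝ) : ℂ)
            + f x * (starRingEnd ℂ) ((g₂ x : ℝ) : ℂ) * ((ϖ₂ x : ℝ) : ℂ)))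
        = f 1 - f (-1)) := by
  have hδne : δ ≠ 0 := hδ.ne'
  obtain ⟨m, hm⟩ : ∃ m : ℕ, d = (m : ℤ) + 2 := ⟨(d - 2).toNat, by omega⟩
  have hd' : (d : ℝ) = (m : ℝ) + 2 := by rw [hm]; push_cast; ring
  have e1 : ∀ a : ℝ, a ^ d = a ^ (m + 2) := by
    intro a; rw [hm]; norm_cast
  have e2 : ∀ a : ℝ, a ^ (d - 2) = a ^ m := by
    intro a; rw [hm, show (m : ℤ) + 2 - 2 = (m : ℤ) by ring, zpow_natCast]
  have e3 : ∀ a : ℝ, a ^ (-d) = (a ^ (m + 2))⁻¹ := by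
    intro a; rw [zpow_neg, e1]
  have e4 : δ ^ (3 - d) = δ ^ 3 / δ ^ (m + 2) := by
    rw [zpow_sub₀ hδne, e1]; norm_cast
  have e5 : δ ^ (1 - d) = δ / δ ^ (m + 2) := by
    rw [zpow_sub₀ hδne, e1, zpow_one]
  set w : ℝ → ℝ := fun x => 1 + δ - x ^ 2 with hw_def
  have hwderiv : ∀ x : ℝ, HasDerivAt w (-(2 * x)) x := by
    intro x
    have : HasDerivAt (fun y : ℝ => 1 + δ - y ^ 2) (0 - 2 * x) x :=
      (hasDerivAt_const x (1 + δ)).sub (by simpa using (hasDerivAt_pow 2 x))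
    simpa using this
  set U : Set ℝ := {x : ℝ | x ^ 2 < 1 + δ} with hU_def
  have hUopen : IsOpen U := isOpen_lt (by continuity) continuous_const
  have hIccU : Set.Icc (-1 : ℝ) 1 ⊆ U := by
    intro x hx
    have h1 : x ^ 2 ≤ 1 := by nlinarith [hx.1, hx.2]
    simp only [hU_def, Set.mem_setOf_eq]; linarith
  have hwpos : ∀ x ∈ U, 0 < w x := fun x hx => by
    simp only [hU_def, Set.mem_setOf_eq] at hx; simp only [hw_def]; linarith
  have hwne : ∀ x ∈ U, w x ≠ 0 := fun x hx => (hwpos x hx).ne'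
  set F : ℝ → ℝ := fun x => ∫ y in (0:ℝ)..x, (1 + δ - y ^ 2) ^ d with hF_def
  have hwcont : Continuous fun y : ℝ => (1 + δ - y ^ 2) ^ d := by
    have h : (fun y : ℝ => (1 + δ - y ^ 2) ^ d) = fun y : ℝ => (1 + δ - y ^ 2) ^ (m + 2) := by
      funext y; exact e1 _
    rw [h]; continuity
  have hF : ∀ x : ℝ, HasDerivAt F (w x ^ (m + 2)) x := by
    intro x
    have := intervalIntegral.integral_hasDerivAt_right
      (f := fun y : ℝ => (1 + δ - y ^ 2) ^ d) (a := (0:ℝ)) (b := x)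
      (hwcont.intervalIntegrable 0 x)
      (hwcont.stronglyMeasurableAtFilter _ _)
      hwcont.continuousAt
    simpa [hF_def, e1] using this
  set C : ℝ := 2 * (d : ℝ) * (A * δ)⁻¹ with hC_def
  have hg₂' : ∀ x, g₂ x = C * (w x ^ (m + 2))⁻¹ * F x := by
    intro x; rw [hg₂ x, e3]
  set G : ℝ → ℝ := fun x =>
    C * (2 * (d : ℝ) * x * (w x ^ (m + 3))⁻¹ * F x + 1) with hG_def
  have hg₂deriv : ∀ x ∈ U, HasDerivAt g₂ (G x) x := by
    intro x hx
    have hne := hwne x hx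
    have h1 : HasDerivAt (fun y => (w y ^ (m + 2))⁻¹)
        (-(((m + 2 : ℕ) : ℝ) * w x ^ (m + 2 - 1) * (-(2 * x))) / (w x ^ (m + 2)) ^ 2) x :=
      ((hwderiv x).pow (m + 2)).inv (pow_ne_zero _ hne)
    have h2 : HasDerivAt (fun y => C * ((w y ^ (m + 2))⁻¹ * F y))
        (C * ((-(((m + 2 : ℕ) : ℝ) * w x ^ (m + 2 - 1) * (-(2 * x))) / (w x ^ (m + 2)) ^ 2) * F x
          + (w x ^ (m + 2))⁻¹ * w x ^ (m + 2))) x :=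
      ((h1.mul (hF x)).const_mul C)
    have heq : (fun y => C * ((w y ^ (m + 2))⁻¹ * F y)) = g₂ := by
      funext y; rw [hg₂' y]; ring
    rw [heq] at h2
    convert h2 using 1
    simp only [hG_def, Nat.add_sub_cancel]
    generalize w x = W at hne ⊢
    generalize F x = Fx
    rw [hd']
    push_cast
    field_simp
    ring
  set K : ℝ → ℝ := fun x =>
    C * (δ ^ 3 / δ ^ (m + 2)) * (2 * (d : ℝ) * x * (w x)⁻¹ * F x + w x ^ (m + 2)) with hK_def
  have hKeq : ∀ x ∈ U, deriv g₂ x * ϖ₁ x = K x := by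
    intro x hx
    have hne := hwne x hx
    rw [(hg₂deriv x hx).deriv, hϖ₁ x, e1, e4]
    simp only [hG_def, hK_def, hw_def]
    simp only [hw_def] at hne
    generalize (1 + δ - x ^ 2) = W at hne ⊢
    generalize F x = Fx
    have h : (W ^ (m + 3))⁻¹ * W ^ (m + 2) = W⁻¹ := by
      rw [show W ^ (m + 3) = W * W ^ (m + 2) by ring, mul_inv, mul_assoc,
        inv_mul_cancel₀ (pow_ne_zero _ hne), mul_one]
    linear_combination (C * (δ ^ 3 / δ ^ (m + 2)) * 2 * (d : ℝ) * x * Fx) * h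
  have hKderiv : ∀ x ∈ U, HasDerivAt K (g₂ x * ϖ₂ x) x := by
    intro x hx
    have hne := hwne x hx
    have h1 : HasDerivAt (fun y => (w y)⁻¹) (-(-(2 * x)) / (w x) ^ 2) x :=
      (hwderiv x).inv hne
    have h2 : HasDerivAt (fun y : ℝ => 2 * (d : ℝ) * y) (2 * (d : ℝ)) x := by
      simpa using (hasDerivAt_id x).const_mul (2 * (d : ℝ))
    have h3 : HasDerivAt (fun y => 2 * (d : ℝ) * y * (w y)⁻¹ * F y + w y ^ (m + 2))
        ((2 * (d : ℝ) * (w x)⁻¹ + 2 * (d : ℝ) * x * (-(-(2 * x)) / (w x) ^ 2)) * F x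
          + 2 * (d : ℝ) * x * (w x)⁻¹ * w x ^ (m + 2)
          + ((m + 2 : ℕ) : ℝ) * w x ^ (m + 2 - 1) * (-(2 * x))) x := by
      exact (((h2.mul h1).mul (hF x)).add ((hwderiv x).pow (m + 2))).congr_deriv (by simp only [Pi.mul_apply])
    have h4 := h3.const_mul (C * (δ ^ 3 / δ ^ (m + 2)))
    have hKfun : K = fun y =>
        C * (δ ^ 3 / δ ^ (m + 2)) * (2 * (d : ℝ) * y * (w y)⁻¹ * F y + w y ^ (m + 2)) := rfl
    rw [hKfun]
    convert h4 using 1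
    any_goals rfl
    rw [hg₂' x, hϖ₂ x, e2, e4]
    simp only [Nat.add_sub_cancel, hw_def]
    have hQ : 1 + δ + x ^ 2 = (1 + δ - x ^ 2) + 2 * x ^ 2 := by ring
    rw [hQ]
    simp only [hw_def] at hne
    generalize (1 + δ - x ^ 2) = W at hne ⊢
    generalize F x = Fx
    rw [hd']
    push_cast
    field_simp
    ring
  have hpart1 : ∀ x ∈ Set.Icc (-1 : ℝ) 1,
      HasDerivAt (fun y => deriv g₂ y * ϖ₁ y) (g₂ x * ϖ₂ x) x := by
    intro x hx
    have hxU := hIccU hx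
    refine HasDerivAt.congr_of_eventuallyEq (hKderiv x hxU) ?_
    filter_upwards [hUopen.mem_nhds hxU] with y hy
    exact hKeq y hy
  refine ⟨hpart1, ?_⟩
  -- boundary values
  set I : ℝ := ∫ x in (0:ℝ)..1, (1 + δ - x ^ 2) ^ d with hI_def
  have hInonneg : 0 ≤ I := by
    refine intervalIntegral.integral_nonneg (by norm_num) fun u hu => ?_
    rw [e1]
    have : 0 ≤ 1 + δ - u ^ 2 := by nlinarith [hu.1, hu.2]
    positivity
  have hd2 : (2 : ℝ) ≤ (d : ℝ) := by exact_mod_cast hd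
  have hApos : 0 < A := by
    rw [hA, e5]
    have h1 : 0 ≤ 4 * (d : ℝ) ^ 2 * (δ / δ ^ (m + 2)) * I :=
      mul_nonneg (mul_nonneg (by positivity) (by positivity)) hInonneg
    nlinarith
  have hAne : A ≠ 0 := hApos.ne'
  have hA'' : A * δ ^ (m + 2) = 4 * (d : ℝ) ^ 2 * δ * I + 2 * (d : ℝ) * δ ^ 2 * δ ^ (m + 2) := by
    rw [hA, e5]
    field_simp
  have hFodd : F (-1) = -F 1 := by
    have h1 : (∫ x in (0:ℝ)..1, (1 + δ - (-x) ^ 2) ^ d)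
        = ∫ x in (-(1:ℝ))..(-(0:ℝ)), (1 + δ - x ^ 2) ^ d :=
      intervalIntegral.integral_comp_neg (fun x => (1 + δ - x ^ 2) ^ d)
    have h2 : (∫ x in (-(1:ℝ))..(-(0:ℝ)), (1 + δ - x ^ 2) ^ d) = I := by
      rw [← h1]; simp only [neg_sq]; rfl
    have h3 : F (-1) = -(∫ x in (-(1:ℝ))..(-(0:ℝ)), (1 + δ - x ^ 2) ^ d) := by
      simp only [hF_def]
      rw [intervalIntegral.integral_symm]
      norm_num
    rw [h3, h2]
  have hw1 : w 1 = δ := by simp only [hw_def]; norm_num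
  have hwm1 : w (-1) = δ := by simp only [hw_def]; norm_num
  have hF1 : F 1 = I := rfl
  have hp : δ ^ (m + 2) ≠ 0 := pow_ne_zero _ hδne
  have hH1 : deriv g₂ 1 * ϖ₁ 1 = 1 := by
    rw [hKeq 1 (hIccU (by norm_num))]
    simp only [hK_def, hC_def, hw1, hF1]
    field_simp
    linear_combination (-1) * hA''
  have hHm1 : deriv g₂ (-1) * ϖ₁ (-1) = 1 := by
    rw [hKeq (-1) (hIccU (by norm_num))]
    simp only [hK_def, hC_def, hwm1]
    rw [hFodd, hF1]
    field_simp
    linear_combination (-1) * hA''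
  -- part 2
  intro f f' hf hf'c
  set S : Set ℝ := Set.Icc (-1 : ℝ) 1 with hS_def
  have hfc : ContinuousOn f S := fun x hx => (hf x hx).continuousWithinAt
  have hHc : ContinuousOn (fun x => deriv g₂ x * ϖ₁ x) S := fun x hx =>
    (hpart1 x hx).continuousAt.continuousWithinAt
  have hg₂c : ContinuousOn g₂ S := fun x hx =>
    (hg₂deriv x (hIccU hx)).continuousAt.continuousWithinAt
  have hϖ₂c : ContinuousOn ϖ₂ S := by
    have hcont : Continuous fun x : ℝ =>
        2 * (d : ℝ) * (δ ^ 3 / δ ^ (m + 2)) * (1 + δ + x ^ 2) * (1 + δ - x ^ 2) ^ m := by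
      continuity
    exact hcont.continuousOn.congr fun x hx => by rw [hϖ₂ x, e2, e4]
  set φ : ℝ → ℂ := fun x => f x * ((deriv g₂ x * ϖ₁ x : ℝ) : ℂ) with hφ_def
  set ψ : ℝ → ℂ := fun x => f' x * ((deriv g₂ x * ϖ₁ x : ℝ) : ℂ)
    + f x * ((g₂ x * ϖ₂ x : ℝ) : ℂ) with hψ_def
  have hφc : ContinuousOn φ S :=
    hfc.mul (Complex.continuous_ofReal.comp_continuousOn hHc)
  have hψc : ContinuousOn ψ S := by
    exact (hf'c.mul (Complex.continuous_ofReal.comp_continuousOn hHc)).add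
      (hfc.mul (Complex.continuous_ofReal.comp_continuousOn (hg₂c.mul hϖ₂c)))
  have hψint : IntervalIntegrable ψ volume (-1 : ℝ) 1 := by
    apply ContinuousOn.intervalIntegrable
    rwa [Set.uIcc_of_le (by norm_num : (-1:ℝ) ≤ 1)]
  have hφd : ∀ x ∈ Set.Ioo (-1 : ℝ) 1, HasDerivWithinAt φ (ψ x) (Set.Ioi x) x := by
    intro x hx
    have hx' : x ∈ S := Set.Ioo_subset_Icc_self hx
    have hfx : HasDerivAt f (f' x) x :=
      (hf x hx').hasDerivAt (Icc_mem_nhds hx.1 hx.2)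
    have hHx : HasDerivAt (fun y => ((deriv g₂ y * ϖ₁ y : ℝ) : ℂ))
        (((g₂ x * ϖ₂ x : ℝ) : ℂ)) x := (hpart1 x hx').ofReal_comp
    exact ((hfx.mul hHx).hasDerivWithinAt)
  have hFTC := intervalIntegral.integral_eq_sub_of_hasDeriv_right_of_le
    (by norm_num : (-1:ℝ) ≤ 1) hφc hφd hψint
  have hcongr : (∫ x in (-1 : ℝ)..1,
      (f' x * (starRingEnd ℂ) ((deriv g₂ x : ℝ) : ℂ) * ((ϖ₁ x : ℝ) : ℂ)
        + f x * (starRingEnd ℂ) ((g₂ x : ℝ) : ℂ) * ((ϖ₂ x : ℝ) : ℂ)))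
      = ∫ x in (-1 : ℝ)..1, ψ x := by
    refine intervalIntegral.integral_congr fun x _ => ?_
    simp only [hψ_def, Complex.conj_ofReal, Complex.ofReal_mul]
    ring
  rw [hcongr, hFTC]
  simp only [hφ_def, hH1, hHm1, Complex.ofReal_one, mul_one]
end

section
/- Let α = L^{-2} with L = log D ≥ 1, Q = exp(L²) (so Q^α = e), and λ₋ as above. Then for 0 < η ≤ 2, Σ_{1 < n ≤ Q^η} λ₋(n)²/n ≪ η², with an absolute implied constant. -/
open Finset Real

-- theta bound from primorial
lemma theta_bound (m : ℕ) : ∑ p ∈ Nat.primesBelow m, Real.log p ≤ 2 * m * Real.log 2 := by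
  have h1 : ∑ p ∈ Nat.primesBelow m, Real.log p
      = Real.log (∏ p ∈ Nat.primesBelow m, (p : ℝ)) := by
    rw [Real.log_prod]
    intro p hp
    exact_mod_cast (Nat.prime_of_mem_primesBelow hp).pos.ne'
  rw [h1]
  have h2 : (∏ p ∈ Nat.primesBelow m, (p : ℝ)) ≤ (4 : ℝ) ^ m := by
    have : (∏ p ∈ Nat.primesBelow m, p) ≤ 4 ^ m := by
      calc (∏ p ∈ Nat.primesBelow m, p) ≤ primorial m := by
            apply Finset.prod_le_prod_of_subset_of_one_le'
            · intro p hp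
              have h1 := Nat.lt_of_mem_primesBelow hp
              have h2 := Nat.prime_of_mem_primesBelow hp
              exact Finset.mem_filter.mpr ⟨Finset.mem_range.mpr (by omega), h2⟩
            · intro i hi _
              exact (Finset.mem_filter.mp hi).2.one_lt.le
        _ ≤ 4 ^ m := primorial_le_4_pow m
    calc (∏ p ∈ Nat.primesBelow m, (p:ℝ)) = ((∏ p ∈ Nat.primesBelow m, p : ℕ) : ℝ) := by
          push_cast; ring
      _ ≤ ((4^m : ℕ) : ℝ) := by exact_mod_cast this
      _ = (4:ℝ)^m := by push_cast; ring
  have h3 : (0:ℝ) < ∏ p ∈ Nat.primesBelow m, (p : ℝ) := by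
    apply Finset.prod_pos
    intro p hp
    exact_mod_cast (Nat.prime_of_mem_primesBelow hp).pos
  calc Real.log (∏ p ∈ Nat.primesBelow m, (p : ℝ)) ≤ Real.log ((4:ℝ)^m) :=
        Real.log_le_log h3 h2
    _ = m * Real.log 4 := by rw [Real.log_pow]
    _ = 2 * m * Real.log 2 := by
        rw [show (4:ℝ) = 2^2 by norm_num, Real.log_pow]; push_cast; ring

lemma cheby_sum (N : ℕ) (hN : 2 ≤ N) :
    ∑ p ∈ Nat.primesBelow (N+1), (Real.log p)^2 / p ≤ 16 * (Real.log N)^2 := by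
  set K := Nat.log 2 N with hK
  have hmaps : ∀ p ∈ Nat.primesBelow (N+1), Nat.log 2 p ∈ Finset.range (K+1) := by
    intro p hp
    have h1 := Nat.lt_of_mem_primesBelow hp
    exact Finset.mem_range.mpr (Nat.lt_succ_of_le (Nat.log_mono_right (by omega)))
  rw [← Finset.sum_fiberwise_of_maps_to hmaps]
  have inner : ∀ k ∈ Finset.range (K+1),
      (∑ p ∈ Finset.filter (fun p => Nat.log 2 p = k) (Nat.primesBelow (N+1)), (Real.log p)^2 / p)
        ≤ 4 * Real.log 2 ^ 2 * (k+1) := by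
    intro k _
    have step1 : ∀ p ∈ Finset.filter (fun p => Nat.log 2 p = k) (Nat.primesBelow (N+1)),
        (Real.log p)^2 / p ≤ ((k+1) * Real.log 2 / 2^k) * Real.log p := by
      intro p hp
      obtain ⟨hp1, hp2⟩ := Finset.mem_filter.mp hp
      have hprime := Nat.prime_of_mem_primesBelow hp1
      have hp0 : (0:ℝ) < p := by exact_mod_cast hprime.pos
      have hlogp : Real.log p ≤ (k+1) * Real.log 2 := by
        have : p < 2^(k+1) := hp2 ▸ Nat.lt_pow_succ_log_self (by norm_num) p
        calc Real.log p ≤ Real.log ((2:ℝ)^(k+1)) := by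
              apply Real.log_le_log hp0; exact_mod_cast this.le
          _ = (k+1) * Real.log 2 := by rw [Real.log_pow]; push_cast; ring
      have hpge : (2:ℝ)^k ≤ p := by
        have : 2^k ≤ p := hp2 ▸ Nat.pow_log_le_self 2 hprime.pos.ne'
        exact_mod_cast this
      have hlogp0 : 0 ≤ Real.log p := Real.log_nonneg (by exact_mod_cast hprime.one_lt.le)
      have h2k : (0:ℝ) < 2^k := by positivity
      calc (Real.log p)^2 / p ≤ (Real.log p) * ((k+1) * Real.log 2) / 2^k := by
            rw [pow_two,]
            apply div_le_div₀ (by positivity) (by nlinarith) h2k hpge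
        _ = ((k+1) * Real.log 2 / 2^k) * Real.log p := by ring
    calc (∑ p ∈ Finset.filter (fun p => Nat.log 2 p = k) (Nat.primesBelow (N+1)), (Real.log p)^2 / p)
        ≤ ∑ p ∈ Finset.filter (fun p => Nat.log 2 p = k) (Nat.primesBelow (N+1)),
            ((k+1) * Real.log 2 / 2^k) * Real.log p := Finset.sum_le_sum step1
      _ = ((k+1) * Real.log 2 / 2^k) *
            ∑ p ∈ Finset.filter (fun p => Nat.log 2 p = k) (Nat.primesBelow (N+1)), Real.log p := by
          rw [Finset.mul_sum]
      _ ≤ ((k+1) * Real.log 2 / 2^k) * (2 * (2^(k+1)) * Real.log 2) := by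
          apply mul_le_mul_of_nonneg_left _ (by positivity)
          calc (∑ p ∈ Finset.filter (fun p => Nat.log 2 p = k) (Nat.primesBelow (N+1)), Real.log p)
              ≤ ∑ p ∈ Nat.primesBelow (2^(k+1)), Real.log p := by
                apply Finset.sum_le_sum_of_subset_of_nonneg
                · intro p hp
                  obtain ⟨hp1, hp2⟩ := Finset.mem_filter.mp hp
                  have hprime := Nat.prime_of_mem_primesBelow hp1
                  have : p < 2^(k+1) := hp2 ▸ Nat.lt_pow_succ_log_self (by norm_num) p
                  exact Nat.mem_primesBelow.mpr ⟨this, hprime⟩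
                · intro i hi _
                  exact Real.log_nonneg
                    (by exact_mod_cast (Nat.prime_of_mem_primesBelow hi).one_lt.le)
            _ ≤ 2 * (2^(k+1) : ℕ) * Real.log 2 := theta_bound (2^(k+1))
            _ = 2 * (2^(k+1)) * Real.log 2 := by push_cast; ring
      _ = 4 * Real.log 2 ^ 2 * (k+1) := by
          have h2k : (0:ℝ) < 2^k := by positivity
          field_simp
          ring
  calc (∑ k ∈ Finset.range (K+1),
        ∑ p ∈ Finset.filter (fun p => Nat.log 2 p = k) (Nat.primesBelow (N+1)), (Real.log p)^2 / p)
      ≤ ∑ k ∈ Finset.range (K+1), 4 * Real.log 2 ^ 2 * (k+1) := Finset.sum_le_sum inner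
    _ = 4 * Real.log 2 ^ 2 * ∑ k ∈ Finset.range (K+1), ((k:ℝ)+1) := by
        rw [Finset.mul_sum]
    _ ≤ 4 * Real.log 2 ^ 2 * ((K+1)*(K+1)) := by
        apply mul_le_mul_of_nonneg_left _ (by positivity)
        calc (∑ k ∈ Finset.range (K+1), ((k:ℝ)+1)) ≤ ∑ k ∈ Finset.range (K+1), ((K:ℝ)+1) := by
              apply Finset.sum_le_sum
              intro k hk
              have := Finset.mem_range.mp hk
              have : (k:ℝ) ≤ K := by exact_mod_cast Nat.lt_succ_iff.mp this
              linarith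
          _ = (K+1)*(K+1) := by rw [Finset.sum_const, Finset.card_range]; push_cast; ring
    _ ≤ 16 * (Real.log N)^2 := by
        have hlog2 : (0:ℝ) < Real.log 2 := Real.log_pos (by norm_num)
        have hKN : ((K:ℝ)+1) * Real.log 2 ≤ 2 * Real.log N := by
          have h1 : (2:ℕ)^K ≤ N := Nat.pow_log_le_self 2 (by omega)
          have h2 : ((K:ℝ)+1) * Real.log 2 = Real.log ((2:ℝ)^(K+1)) := by
            rw [Real.log_pow]; push_cast; ring
          have h3 : ((2:ℝ))^(K+1) ≤ 2 * N := by
            have : (2:ℝ)^K ≤ N := by exact_mod_cast h1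
            calc ((2:ℝ))^(K+1) = 2 * 2^K := by ring
              _ ≤ 2 * N := by linarith
          have h4 : Real.log ((2:ℝ)^(K+1)) ≤ Real.log (2*N) := by
            apply Real.log_le_log (by positivity) h3
          have h5 : Real.log (2*(N:ℝ)) = Real.log 2 + Real.log N := by
            rw [Real.log_mul (by norm_num) (by positivity)]
          have h6 : Real.log 2 ≤ Real.log N :=
            Real.log_le_log (by norm_num) (by exact_mod_cast hN)
          linarith [h2, h4]
        have hKpos : (0:ℝ) ≤ (K:ℝ)+1 := by positivity
        have hlogN : 0 ≤ Real.log N := Real.log_nonneg (by exact_mod_cast hN.trans' (by norm_num))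
        have e1 : 4 * Real.log 2 ^ 2 * (((K:ℝ)+1)*((K:ℝ)+1)) = 4 * ((((K:ℝ)+1) * Real.log 2)^2) := by ring
        have e2 : (((K:ℝ)+1) * Real.log 2)^2 ≤ (2 * Real.log N)^2 := by
          apply sq_le_sq' _ hKN
          nlinarith
        nlinarith

open Finset Real

noncomputable def Ffun (β : ℝ) (n : ℕ) : ℝ :=
  if n = 0 then 0 else (∏ p ∈ n.primeFactors, (1 - (p:ℝ) ^ (-2*β))^2) / n

lemma fac_nonneg {β : ℝ} (hβ : 0 < β) {p : ℕ} (hp : 1 ≤ p) :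
    0 ≤ 1 - (p:ℝ) ^ (-2*β) := by
  have : (p:ℝ) ^ (-2*β) ≤ 1 := by
    apply Real.rpow_le_one_of_one_le_of_nonpos (by exact_mod_cast hp) (by linarith)
  linarith

lemma fac_le_one {β : ℝ} {p : ℕ} : (1:ℝ) - (p:ℝ) ^ (-2*β) ≤ 1 := by
  have : (0:ℝ) ≤ (p:ℝ) ^ (-2*β) := Real.rpow_nonneg (by positivity) _
  linarith

lemma fac_le {β : ℝ} (hβ : 0 < β) {p : ℕ} (hp : 1 ≤ p) :
    1 - (p:ℝ) ^ (-2*β) ≤ 2 * β * Real.log p := by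
  have hp0 : (0:ℝ) < p := by exact_mod_cast hp
  rw [Real.rpow_def_of_pos hp0]
  have := Real.add_one_le_exp (Real.log p * (-2*β))
  have hlog : 0 ≤ Real.log p := Real.log_nonneg (by exact_mod_cast hp)
  nlinarith

lemma Ffun_nonneg {β : ℝ} (hβ : 0 < β) (n : ℕ) : 0 ≤ Ffun β n := by
  unfold Ffun
  split_ifs with h
  · exact le_refl _
  · apply div_nonneg _ (by positivity)
    exact Finset.prod_nonneg fun p hp => sq_nonneg _

lemma Ffun_one (β : ℝ) : Ffun β 1 = 1 := by simp [Ffun]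

lemma Ffun_mul {β : ℝ} : ∀ {m n : ℕ}, Nat.Coprime m n →
    Ffun β (m * n) = Ffun β m * Ffun β n := by
  intro m n hmn
  rcases eq_or_ne m 0 with rfl | hm
  · have : n = 1 := Nat.coprime_zero_left n |>.mp hmn
    subst this; simp [Ffun]
  rcases eq_or_ne n 0 with rfl | hn
  · have : m = 1 := Nat.coprime_zero_right m |>.mp hmn
    subst this; simp [Ffun]
  unfold Ffun
  rw [if_neg (Nat.mul_ne_zero hm hn), if_neg hm, if_neg hn]
  rw [Nat.primeFactors_mul hm hn, Finset.prod_union (Nat.Coprime.disjoint_primeFactors hmn)]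
  push_cast
  field_simp

lemma Ffun_prime_pow {β : ℝ} {p : ℕ} (hp : p.Prime) (e : ℕ) (he : e ≠ 0) :
    Ffun β (p ^ e) = (1 - (p:ℝ) ^ (-2*β))^2 / (p:ℝ)^e := by
  unfold Ffun
  rw [if_neg (pow_ne_zero e hp.pos.ne')]
  rw [Nat.primeFactors_prime_pow he hp]
  push_cast
  simp

lemma Ffun_summable {β : ℝ} (hβ : 0 < β) {p : ℕ} (hp : p.Prime) :
    Summable (fun e : ℕ => ‖Ffun β (p ^ e)‖) := by
  apply Summable.of_nonneg_of_le (fun e => norm_nonneg _) (fun e => ?_)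
    (summable_geometric_of_lt_one (by norm_num : (0:ℝ) ≤ 1/2) (by norm_num))
  have hnn := Ffun_nonneg hβ (p ^ e)
  rw [Real.norm_of_nonneg hnn]
  rcases Nat.eq_zero_or_pos e with rfl | he
  · simp [Ffun_one]
  · rw [Ffun_prime_pow hp e he.ne']
    have h1 : (1 - (p:ℝ) ^ (-2*β))^2 ≤ 1 := by
      have ha := fac_nonneg hβ (hp.one_lt.le : 1 ≤ p)
      have hb := fac_le_one (β := β) (p := p)
      nlinarith
    have h2 : (2:ℝ)^e ≤ (p:ℝ)^e := by
      apply pow_le_pow_left₀ (by norm_num)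
      exact_mod_cast hp.two_le
    have h3 : (0:ℝ) < (p:ℝ)^e := by
      have : (0:ℝ) < (p:ℝ) := by exact_mod_cast hp.pos
      positivity
    calc (1 - (p:ℝ) ^ (-2*β))^2 / (p:ℝ)^e ≤ 1 / (2:ℝ)^e := by
          apply div_le_div₀ (by norm_num) h1 (by positivity) h2
      _ = (1/2)^e := by rw [div_pow, one_pow]

lemma Ffun_tsum_le {β : ℝ} (hβ : 0 < β) {p : ℕ} (hp : p.Prime) :
    ∑' e : ℕ, Ffun β (p ^ e) ≤ 1 + 8 * β^2 * (Real.log p)^2 / p := by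
  have hsum : Summable (fun e : ℕ => Ffun β (p ^ e)) := (Ffun_summable hβ hp).of_norm
  have hp2 : (2:ℝ) ≤ p := by exact_mod_cast hp.two_le
  have hp0 : (0:ℝ) < p := by linarith
  set c : ℝ := (1 - (p:ℝ) ^ (-2*β))^2 with hc
  have htail : (fun e : ℕ => Ffun β (p ^ (e+1))) = fun e : ℕ => (c/p) * (1/p)^e := by
    funext e
    rw [Ffun_prime_pow hp (e+1) (Nat.succ_ne_zero e)]
    rw [pow_succ]
    rw [one_div, inv_pow, hc]
    field_simp
    ring
  rw [hsum.tsum_eq_zero_add]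
  rw [pow_zero, Ffun_one, htail, tsum_mul_left,
    tsum_geometric_of_lt_one (by positivity) (by rw [div_lt_one hp0]; linarith)]
  have hgeom : (1 - 1/(p:ℝ))⁻¹ ≤ 2 := by
    rw [inv_le_comm₀ (by rw [sub_pos, div_lt_one hp0]; linarith) (by norm_num)]
    have : 1/(p:ℝ) ≤ 1/2 := by
      apply div_le_div_of_nonneg_left (by norm_num) (by norm_num) hp2
    linarith
  have hcle : c ≤ (2 * β * Real.log p)^2 := by
    have h1 := fac_nonneg hβ (hp.one_lt.le : 1 ≤ p)
    have h2 := fac_le hβ (hp.one_lt.le : 1 ≤ p) (p := p)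
    rw [hc]
    nlinarith
  have hc0 : 0 ≤ c := sq_nonneg _
  have : c / p * (1 - 1/(p:ℝ))⁻¹ ≤ (c/p) * 2 := by
    apply mul_le_mul_of_nonneg_left hgeom (by positivity)
  have hfinal : (c/p) * 2 ≤ 8 * β^2 * (Real.log p)^2 / p := by
    rw [div_mul_eq_mul_div]
    rw [div_le_div_iff_of_pos_right hp0]
    nlinarith
  linarith

lemma euler_bound {β : ℝ} (hβ : 0 < β) (N : ℕ) :
    ∑ n ∈ Finset.Icc 2 N, Ffun β n ≤
      Real.exp (∑ p ∈ Nat.primesBelow (N+1), 8 * β^2 * (Real.log p)^2 / p) - 1 := by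
  obtain ⟨hsummable, hhassum⟩ :=
    EulerProduct.summable_and_hasSum_smoothNumbers_prod_primesBelow_tsum
      (f := Ffun β) (Ffun_one β) Ffun_mul (fun {p} hp => Ffun_summable hβ hp) (N+1)
  -- sum over Icc 1 N ≤ tsum over smooth numbers
  have hsubset : ∀ n ∈ Finset.Icc 1 N, n ∈ Nat.smoothNumbers (N+1) := by
    intro n hn
    obtain ⟨h1, h2⟩ := Finset.mem_Icc.mp hn
    rw [Nat.mem_smoothNumbers']
    intro p hp hdvd
    have := Nat.le_of_dvd (by omega) hdvd
    omega
  have hsummable' : Summable (Set.indicator (Nat.smoothNumbers (N+1)) (Ffun β)) :=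
    summable_subtype_iff_indicator.mp hsummable.of_norm
  have h1 : ∑ n ∈ Finset.Icc 1 N, Ffun β n ≤
      ∑' m : Nat.smoothNumbers (N+1), Ffun β m := by
    rw [_root_.tsum_subtype]
    calc ∑ n ∈ Finset.Icc 1 N, Ffun β n
        = ∑ n ∈ Finset.Icc 1 N, Set.indicator (Nat.smoothNumbers (N+1)) (Ffun β) n := by
          apply Finset.sum_congr rfl
          intro n hn
          rw [Set.indicator_of_mem (hsubset n hn)]
      _ ≤ ∑' n, Set.indicator (Nat.smoothNumbers (N+1)) (Ffun β) n := by
          apply hsummable'.sum_le_tsum _ _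
          intro i _
          apply Set.indicator_nonneg
          intro a _
          exact Ffun_nonneg hβ a
  have h2 : (∑' m : Nat.smoothNumbers (N+1), Ffun β m : ℝ)
      = ∏ p ∈ Nat.primesBelow (N+1), ∑' e : ℕ, Ffun β (p ^ e) := hhassum.tsum_eq
  have h3 : (∏ p ∈ Nat.primesBelow (N+1), ∑' e : ℕ, Ffun β (p ^ e))
      ≤ Real.exp (∑ p ∈ Nat.primesBelow (N+1), 8 * β^2 * (Real.log p)^2 / p) := by
    rw [Real.exp_sum]
    apply Finset.prod_le_prod
    · intro p hp
      apply tsum_nonneg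
      intro e
      exact Ffun_nonneg hβ _
    · intro p hp
      have hprime := Nat.prime_of_mem_primesBelow hp
      calc (∑' e : ℕ, Ffun β (p ^ e)) ≤ 1 + 8 * β^2 * (Real.log p)^2 / p :=
            Ffun_tsum_le hβ hprime
        _ ≤ Real.exp (8 * β^2 * (Real.log p)^2 / p) := by
            have := Real.add_one_le_exp (8 * β^2 * (Real.log p)^2 / p)
            linarith
  rcases Nat.eq_zero_or_pos N with rfl | hN1
  · have e1 : Finset.Icc 2 0 = (∅ : Finset ℕ) := by decide
    have e2 : Nat.primesBelow 1 = (∅ : Finset ℕ) := by decide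
    rw [e1, e2]
    simp
  have h4 : ∑ n ∈ Finset.Icc 1 N, Ffun β n = 1 + ∑ n ∈ Finset.Icc 2 N, Ffun β n := by
    have hins : Finset.Icc 1 N = insert 1 (Finset.Icc 2 N) := by
      ext x
      simp only [Finset.mem_Icc, Finset.mem_insert]
      omega
    rw [hins, Finset.sum_insert (by simp), Ffun_one]
  linarith [h1, h2 ▸ h3]

lemma lam_eq (β : ℝ) (lam : ℕ → ℝ) (h1 : lam 1 = 1)
    (hmul : ∀ m n : ℕ, m.Coprime n → lam (m * n) = lam m * lam n)
    (hpp : ∀ p : ℕ, p.Prime → ∀ l : ℕ, 1 ≤ l →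
      lam (p ^ l) = (p : ℝ) ^ ((l : ℝ) * β) * (1 - (p : ℝ) ^ (-2 * β))) :
    ∀ n : ℕ, n ≠ 0 →
      lam n = (n : ℝ) ^ (β : ℝ) * ∏ p ∈ n.primeFactors, (1 - (p:ℝ) ^ (-2*β)) := by
  intro n
  induction n using Nat.recOnPosPrimePosCoprime with
  | prime_pow p l hp hl =>
    intro _
    have hnp : p.Prime := hp
    rw [hpp p hnp l hl, Nat.primeFactors_prime_pow hl.ne' hnp, Finset.prod_singleton]
    have hcast : ((p ^ l : ℕ) : ℝ) = (p:ℝ) ^ (l:ℕ) := by push_cast; ring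
    rw [hcast, ← Real.rpow_natCast (p:ℝ) l, ← Real.rpow_mul (by positivity)]
  | zero => intro h; exact absurd rfl h
  | one => intro _; simp [h1]
  | coprime a b ha hb hab iha ihb =>
    intro _
    rw [hmul a b hab, iha (by omega), ihb (by omega),
      Nat.primeFactors_mul (by omega) (by omega),
      Finset.prod_union (Nat.Coprime.disjoint_primeFactors hab)]
    push_cast
    rw [Real.mul_rpow (by positivity) (by positivity)]
    ring

lemma exp_sub_one_le (x : ℝ) : Real.exp x - 1 ≤ x * Real.exp x := by
  have h := Real.add_one_le_exp (-x)
  have hpos := Real.exp_pos x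
  have hmul : Real.exp (-x) * Real.exp x = 1 := by rw [← Real.exp_add]; simp
  nlinarith [mul_le_mul_of_nonneg_right h hpos.le]

/-- Let `L = log D ≥ 1`, `α = L⁻²`, `Q = exp(L²)`, and let `λ₋` be the multiplicative
function with `λ₋(p^l) = p^{lα}(1 − p^{-2α})` for `l ≥ 1`. Then for `0 < η ≤ 2`,
`Σ_{1 < n ≤ Q^η} λ₋(n)²/n ≪ η²` with an absolute implied constant. -/
theorem stmt_10 : ∃ C > (0 : ℝ), ∀ D : ℝ, 1 ≤ Real.log D →
    ∀ lam : ℕ → ℝ, lam 1 = 1 →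
    (∀ m n : ℕ, m.Coprime n → lam (m * n) = lam m * lam n) →
    (∀ p : ℕ, p.Prime → ∀ l : ℕ, 1 ≤ l →
      lam (p ^ l) = (p : ℝ) ^ ((l : ℝ) * (Real.log D ^ 2)⁻¹) *
        (1 - (p : ℝ) ^ (-2 * (Real.log D ^ 2)⁻¹))) →
    ∀ η : ℝ, 0 < η → η ≤ 2 →
      ∑ n ∈ Finset.Icc 2 (Nat.floor ((Real.exp (Real.log D ^ 2)) ^ η)),
          (lam n) ^ 2 / (n : ℝ)
        ≤ C * η ^ 2 := by
  refine ⟨128 * Real.exp 516, by positivity, ?_⟩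
  intro D hL lam h1 hmul hpp η hη hη2
  set L : ℝ := Real.log D with hLdef
  set β : ℝ := (L ^ 2)⁻¹ with hβdef
  have hL2 : (1:ℝ) ≤ L ^ 2 := by nlinarith
  have hL2pos : (0:ℝ) < L ^ 2 := by linarith
  have hβpos : 0 < β := by positivity
  have hβL : β * L ^ 2 = 1 := inv_mul_cancel₀ (by linarith)
  set X : ℝ := (Real.exp (L ^ 2)) ^ η with hXdef
  set N : ℕ := Nat.floor X with hNdef
  have hXeq : X = Real.exp (L ^ 2 * η) := by
    rw [hXdef, Real.rpow_def_of_pos (Real.exp_pos _), Real.log_exp]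
  have hXpos : 0 < X := by rw [hXeq]; exact Real.exp_pos _
  by_cases hN2 : 2 ≤ N
  · -- main case
    have hNpos : (0:ℝ) < N := by exact_mod_cast (by omega : 0 < N)
    have hNX : (N : ℝ) ≤ X := Nat.floor_le hXpos.le
    have hlogN : Real.log N ≤ η * L ^ 2 := by
      calc Real.log N ≤ Real.log X := Real.log_le_log hNpos hNX
        _ = L ^ 2 * η := by rw [hXeq, Real.log_exp]
        _ = η * L ^ 2 := by ring
    have hlogN0 : 0 ≤ Real.log N :=
      Real.log_nonneg (by exact_mod_cast (by omega : 1 ≤ N))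
    -- pointwise bound
    have hpoint : ∀ n ∈ Finset.Icc 2 N, lam n ^ 2 / (n:ℝ) ≤ Real.exp 4 * Ffun β n := by
      intro n hn
      obtain ⟨hn2, hnN⟩ := Finset.mem_Icc.mp hn
      have hn0 : n ≠ 0 := by omega
      have hneq := lam_eq β lam h1 hmul hpp n hn0
      have hnpos : (0:ℝ) < n := by exact_mod_cast (by omega : 0 < n)
      have hFeq : Ffun β n = (∏ p ∈ n.primeFactors, (1 - (p:ℝ) ^ (-2*β))^2) / n := by
        rw [Ffun, if_neg hn0]
      have hprod : (∏ p ∈ n.primeFactors, (1 - (p:ℝ) ^ (-2*β)))^2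
          = ∏ p ∈ n.primeFactors, (1 - (p:ℝ) ^ (-2*β))^2 := by
        rw [← Finset.prod_pow]
      have hlam2 : lam n ^ 2 / n = ((n:ℝ) ^ (β:ℝ))^2 * Ffun β n := by
        rw [hneq, hFeq, mul_pow, hprod]
        ring
      rw [hlam2]
      have hrpow_le : (n:ℝ) ^ (β:ℝ) ≤ Real.exp η := by
        calc (n:ℝ) ^ (β:ℝ) ≤ X ^ (β:ℝ) :=
              Real.rpow_le_rpow hnpos.le (hNX.trans' (by exact_mod_cast hnN)) hβpos.le
          _ = Real.exp (L ^ 2 * η * β) := by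
              rw [hXeq, ← Real.exp_mul]
          _ = Real.exp η := by rw [show L ^ 2 * η * β = η * (β * L ^ 2) by ring, hβL]; ring_nf
      have hsq : ((n:ℝ) ^ (β:ℝ))^2 ≤ Real.exp 4 := by
        have h0 : (0:ℝ) ≤ (n:ℝ) ^ (β:ℝ) := Real.rpow_nonneg hnpos.le _
        calc ((n:ℝ) ^ (β:ℝ))^2 ≤ (Real.exp η)^2 := by nlinarith
          _ = Real.exp (η + η) := by rw [Real.exp_add]; ring
          _ ≤ Real.exp 4 := Real.exp_le_exp.mpr (by linarith)
      exact mul_le_mul_of_nonneg_right hsq (Ffun_nonneg hβpos n)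
    -- sum bounds
    have hS0 : ∀ p ∈ Nat.primesBelow (N+1), (0:ℝ) ≤ 8 * β^2 * (Real.log p)^2 / p := by
      intro p hp
      have hpp2 := (Nat.prime_of_mem_primesBelow hp).pos
      positivity
    set S : ℝ := ∑ p ∈ Nat.primesBelow (N+1), 8 * β^2 * (Real.log p)^2 / p with hSdef
    have hSnonneg : 0 ≤ S := Finset.sum_nonneg hS0
    have hSle : S ≤ 128 * η ^ 2 := by
      have e1 : S = 8 * β^2 * ∑ p ∈ Nat.primesBelow (N+1), (Real.log p)^2 / p := by
        rw [hSdef, Finset.mul_sum]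
        apply Finset.sum_congr rfl
        intro p _
        ring
      have e2 := cheby_sum N hN2
      have e3 : (Real.log N)^2 ≤ (η * L ^ 2)^2 := by nlinarith
      have e4 : 8 * β^2 * (16 * (η * L^2)^2) = 128 * η^2 * (β * L^2)^2 := by ring
      calc S ≤ 8 * β^2 * (16 * (Real.log N)^2) := by
            rw [e1]
            apply mul_le_mul_of_nonneg_left e2 (by positivity)
        _ ≤ 8 * β^2 * (16 * (η * L^2)^2) := by
            apply mul_le_mul_of_nonneg_left (by nlinarith) (by positivity)
        _ = 128 * η^2 := by rw [e4, hβL]; ring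
    have hS512 : S ≤ 512 := by nlinarith
    calc ∑ n ∈ Finset.Icc 2 N, lam n ^ 2 / (n:ℝ)
        ≤ ∑ n ∈ Finset.Icc 2 N, Real.exp 4 * Ffun β n := Finset.sum_le_sum hpoint
      _ = Real.exp 4 * ∑ n ∈ Finset.Icc 2 N, Ffun β n := by rw [Finset.mul_sum]
      _ ≤ Real.exp 4 * (Real.exp S - 1) := by
          apply mul_le_mul_of_nonneg_left (euler_bound hβpos N) (Real.exp_pos 4).le
      _ ≤ Real.exp 4 * (S * Real.exp S) := by
          apply mul_le_mul_of_nonneg_left (exp_sub_one_le S) (Real.exp_pos 4).le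
      _ ≤ Real.exp 4 * ((128 * η^2) * Real.exp 512) := by
          apply mul_le_mul_of_nonneg_left _ (Real.exp_pos 4).le
          exact mul_le_mul hSle (Real.exp_le_exp.mpr hS512) (Real.exp_pos S).le (by positivity)
      _ = 128 * Real.exp 516 * η ^ 2 := by
          rw [show (516:ℝ) = 4 + 512 by norm_num, Real.exp_add]
          ring
  · -- degenerate case
    have : Finset.Icc 2 N = ∅ := Finset.Icc_eq_empty (by omega)
    rw [this, Finset.sum_empty]
    positivity
end

section
/- With U±(x) = (1/(2πi))∫_{C±} Q^{xs} ds/s as above and R = ω log Q, we have U₊(x) = 1 + O((1+Rx)^{-1}) and U₋(x) ≪ (1+Rx)^{-1} for x ≥ 0, and by symmetry U₋(x) = 1 + O((1+R|x|)^{-1}) and U₊(x) ≪ (1+R|x|)^{-1} for x ≤ 0, with absolute implied constants. -/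
open MeasureTheory Real

noncomputable section

private def Fc (r : ℝ) : ℝ → ℂ := fun θ => Complex.exp ((r : ℂ) * Complex.exp ((θ : ℂ) * Complex.I))

private lemma Fc_cont (r : ℝ) : Continuous (Fc r) := by
  unfold Fc; fun_prop

private lemma Fc_intble (r a b : ℝ) : IntervalIntegrable (Fc r) volume a b :=
  (Fc_cont r).intervalIntegrable a b

private lemma circle_int (r : ℝ) :
    (∫ θ in (0:ℝ)..(2*Real.pi), Fc r θ) = (2*Real.pi : ℝ) := by
  have hd : DiffContOnCl ℂ (fun z => Complex.exp ((r : ℂ) * z)) (Metric.ball 0 1) :=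
    (Complex.differentiable_exp.comp ((differentiable_id.const_mul _))).diffContOnCl
  have h0 : (0:ℂ) ∈ Metric.ball (0:ℂ) 1 := Metric.mem_ball_self one_pos
  have key := hd.circleIntegral_sub_inv_smul h0
  rw [circleIntegral] at key
  have hcongr : ∀ θ : ℝ, deriv (circleMap 0 1) θ •
      ((circleMap 0 1 θ - 0)⁻¹ • Complex.exp ((r : ℂ) * circleMap 0 1 θ))
      = Complex.I * Fc r θ := by
    intro θ
    have hne : Complex.exp ((θ:ℂ) * Complex.I) ≠ 0 := Complex.exp_ne_zero _
    simp only [deriv_circleMap, circleMap, Complex.ofReal_one, one_mul, zero_add,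
      smul_eq_mul, sub_zero, Fc]
    field_simp
  rw [intervalIntegral.integral_congr (fun θ _ => hcongr θ)] at key
  rw [intervalIntegral.integral_const_mul] at key
  have hI : (Complex.I : ℂ) ≠ 0 := Complex.I_ne_zero
  have : Complex.I * (∫ θ in (0:ℝ)..(2*Real.pi), Fc r θ)
      = Complex.I * (2*Real.pi : ℝ) := by
    rw [key]; simp [Complex.exp_zero, smul_eq_mul]; ring
  exact mul_left_cancel₀ hI this

private lemma Fc_periodic (r : ℝ) : Function.Periodic (Fc r) (2*Real.pi) := by
  intro θ
  unfold Fc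
  push_cast
  rw [add_mul, Complex.exp_add, Complex.exp_two_pi_mul_I, mul_one]

private lemma sum_halves (r : ℝ) :
    (∫ θ in (-(Real.pi/2))..(Real.pi/2), Fc r θ)
      + (∫ θ in (Real.pi/2)..(3*Real.pi/2), Fc r θ) = (2*Real.pi : ℝ) := by
  rw [intervalIntegral.integral_add_adjacent_intervals (Fc_intble r _ _) (Fc_intble r _ _)]
  have h1 : (3*Real.pi/2 : ℝ) = -(Real.pi/2) + 2*Real.pi := by ring
  rw [h1]
  have := (Fc_periodic r).intervalIntegral_add_eq (-(Real.pi/2)) 0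
  rw [this, zero_add]
  exact circle_int r

private lemma shift_lem (r : ℝ) :
    (∫ θ in (Real.pi/2)..(3*Real.pi/2), Fc r θ)
      = ∫ θ in (-(Real.pi/2))..(Real.pi/2), Fc (-r) θ := by
  have h := intervalIntegral.integral_comp_add_right (a := -(Real.pi/2)) (b := Real.pi/2)
    (Fc r) Real.pi
  have e1 : -(Real.pi/2) + Real.pi = Real.pi/2 := by ring
  have e2 : Real.pi/2 + Real.pi = 3*Real.pi/2 := by ring
  rw [e1, e2] at h
  rw [← h]
  apply intervalIntegral.integral_congr
  intro θ _
  unfold Fc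
  push_cast
  rw [add_mul, Complex.exp_add, Complex.exp_pi_mul_I]
  ring_nf

private lemma norm_minus (r : ℝ) (hr : 0 ≤ r) :
    ‖∫ θ in (Real.pi/2)..(3*Real.pi/2), Fc r θ‖ ≤ 2*Real.pi/(1+r) := by
  have hpi := Real.pi_pos
  have hab : (Real.pi/2 : ℝ) ≤ 3*Real.pi/2 := by linarith
  have h1 : ‖∫ θ in (Real.pi/2)..(3*Real.pi/2), Fc r θ‖
      ≤ ∫ θ in (Real.pi/2)..(3*Real.pi/2), Real.exp (r * Real.cos θ) := by
    refine le_trans (intervalIntegral.norm_integral_le_integral_norm hab) (le_of_eq ?_)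
    apply intervalIntegral.integral_congr
    intro θ _
    simp only [Fc]
    rw [Complex.norm_exp]
    congr 1
    simp [Complex.mul_re, Complex.exp_ofReal_mul_I_re, Complex.exp_ofReal_mul_I_im]
  have hcont : ∀ a b : ℝ, IntervalIntegrable (fun θ => Real.exp (r * Real.cos θ)) volume a b :=
    fun a b => (Real.continuous_exp.comp (continuous_const.mul Real.continuous_cos)).intervalIntegrable a b
  rcases le_or_gt r 1 with hr1 | hr1
  · -- trivial bound by π
    have h2 : (∫ θ in (Real.pi/2)..(3*Real.pi/2), Real.exp (r * Real.cos θ))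
        ≤ ∫ _θ in (Real.pi/2)..(3*Real.pi/2), (1:ℝ) := by
      apply intervalIntegral.integral_mono_on hab (hcont _ _)
        (intervalIntegrable_const)
      intro θ hθ
      have hc : Real.cos θ ≤ 0 :=
        Real.cos_nonpos_of_pi_div_two_le_of_le hθ.1 (by linarith [hθ.2])
      have : r * Real.cos θ ≤ 0 := mul_nonpos_of_nonneg_of_nonpos hr hc
      calc Real.exp (r * Real.cos θ) ≤ Real.exp 0 := Real.exp_le_exp.2 this
        _ = 1 := Real.exp_zero
    rw [intervalIntegral.integral_const] at h2
    have h3 : ((3*Real.pi/2 - Real.pi/2) : ℝ) • (1:ℝ) = Real.pi := by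
      simp [smul_eq_mul]; ring
    rw [h3] at h2
    have h4 : Real.pi ≤ 2*Real.pi/(1+r) := by
      rw [le_div_iff₀ (by linarith)]
      nlinarith
    linarith
  · -- r > 1
    have hr0 : 0 < r := by linarith
    have hsplit : (∫ θ in (Real.pi/2)..(3*Real.pi/2), Real.exp (r * Real.cos θ))
        = (∫ θ in (Real.pi/2)..(Real.pi), Real.exp (r * Real.cos θ))
          + ∫ θ in (Real.pi)..(3*Real.pi/2), Real.exp (r * Real.cos θ) :=
      (intervalIntegral.integral_add_adjacent_intervals (hcont _ _) (hcont _ _)).symm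
    -- first half
    have hA : (∫ θ in (Real.pi/2)..(Real.pi), Real.exp (r * Real.cos θ)) ≤ Real.pi/(2*r) := by
      have hmono : (∫ θ in (Real.pi/2)..(Real.pi), Real.exp (r * Real.cos θ))
          ≤ ∫ θ in (Real.pi/2)..(Real.pi), Real.exp (r - 2*r/Real.pi*θ) := by
        apply intervalIntegral.integral_mono_on (by linarith) (hcont _ _)
        · exact ((Real.continuous_exp.comp (by fun_prop))).intervalIntegrable _ _
        · intro θ hθ
          apply Real.exp_le_exp.2
          have hs := Real.mul_le_sin (x := θ - Real.pi/2) (by linarith [hθ.1]) (by linarith [hθ.2])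
          rw [Real.sin_sub_pi_div_two] at hs
          have hcos : Real.cos θ ≤ 1 - 2/Real.pi*θ := by
            have h2 : 2/Real.pi * (θ - Real.pi/2) = 2/Real.pi*θ - 1 := by
              field_simp
            nlinarith
          calc r * Real.cos θ ≤ r * (1 - 2/Real.pi*θ) :=
                mul_le_mul_of_nonneg_left hcos hr0.le
            _ = r - 2*r/Real.pi*θ := by field_simp
      have hcomp : (∫ θ in (Real.pi/2)..(Real.pi), Real.exp (r - 2*r/Real.pi*θ))
          = (-(Real.pi/(2*r)) * Real.exp (r - 2*r/Real.pi*Real.pi))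
            - (-(Real.pi/(2*r)) * Real.exp (r - 2*r/Real.pi*(Real.pi/2))) := by
        refine intervalIntegral.integral_eq_sub_of_hasDerivAt
          (f := fun θ : ℝ => -(Real.pi/(2*r)) * Real.exp (r - 2*r/Real.pi*θ)) ?_ ?_
        · intro θ _
          have hd : HasDerivAt (fun θ : ℝ => r - 2*r/Real.pi*θ) (-(2*r/Real.pi)) θ := by
            simpa using ((hasDerivAt_id θ).const_mul (2*r/Real.pi)).const_sub r
          have := (hd.exp).const_mul (-(Real.pi/(2*r)))
          convert this using 1
          all_goals first | rfl | field_simp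
        · exact ((Real.continuous_exp.comp (by fun_prop))).intervalIntegrable _ _
      have e1 : r - 2*r/Real.pi*Real.pi = -r := by field_simp; ring
      have e2 : r - 2*r/Real.pi*(Real.pi/2) = 0 := by field_simp; ring
      rw [e1, e2, Real.exp_zero] at hcomp
      refine hmono.trans ?_
      rw [hcomp]
      have hexp : 0 < Real.exp (-r) := Real.exp_pos _
      have hpr : 0 < Real.pi/(2*r) := by positivity
      nlinarith
    -- second half
    have hB : (∫ θ in (Real.pi)..(3*Real.pi/2), Real.exp (r * Real.cos θ)) ≤ Real.pi/(2*r) := by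
      have hmono : (∫ θ in (Real.pi)..(3*Real.pi/2), Real.exp (r * Real.cos θ))
          ≤ ∫ θ in (Real.pi)..(3*Real.pi/2), Real.exp (2*r/Real.pi*θ - 3*r) := by
        apply intervalIntegral.integral_mono_on (by linarith) (hcont _ _)
        · exact ((Real.continuous_exp.comp (by fun_prop))).intervalIntegrable _ _
        · intro θ hθ
          apply Real.exp_le_exp.2
          have hs := Real.mul_le_sin (x := 3*Real.pi/2 - θ) (by linarith [hθ.2]) (by linarith [hθ.1])
          have hsin : Real.sin (3*Real.pi/2 - θ) = -Real.cos θ := by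
            have : (3*Real.pi/2 - θ : ℝ) = Real.pi - (θ - Real.pi/2) := by ring
            rw [this, Real.sin_pi_sub, Real.sin_sub_pi_div_two]
          rw [hsin] at hs
          have hcos : Real.cos θ ≤ 2/Real.pi*θ - 3 := by
            have h2 : 2/Real.pi * (3*Real.pi/2 - θ) = 3 - 2/Real.pi*θ := by
              field_simp
            nlinarith
          calc r * Real.cos θ ≤ r * (2/Real.pi*θ - 3) :=
                mul_le_mul_of_nonneg_left hcos hr0.le
            _ = 2*r/Real.pi*θ - 3*r := by field_simp
      have hcomp : (∫ θ in (Real.pi)..(3*Real.pi/2), Real.exp (2*r/Real.pi*θ - 3*r))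
          = ((Real.pi/(2*r)) * Real.exp (2*r/Real.pi*(3*Real.pi/2) - 3*r))
            - ((Real.pi/(2*r)) * Real.exp (2*r/Real.pi*Real.pi - 3*r)) := by
        refine intervalIntegral.integral_eq_sub_of_hasDerivAt
          (f := fun θ : ℝ => (Real.pi/(2*r)) * Real.exp (2*r/Real.pi*θ - 3*r)) ?_ ?_
        · intro θ _
          have hd : HasDerivAt (fun θ : ℝ => 2*r/Real.pi*θ - 3*r) (2*r/Real.pi) θ := by
            simpa using ((hasDerivAt_id θ).const_mul (2*r/Real.pi)).sub_const (3*r)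
          have := (hd.exp).const_mul (Real.pi/(2*r))
          convert this using 1
          all_goals first | rfl | field_simp
        · exact ((Real.continuous_exp.comp (by fun_prop))).intervalIntegrable _ _
      have e1 : 2*r/Real.pi*(3*Real.pi/2) - 3*r = 0 := by field_simp; ring
      have e2 : 2*r/Real.pi*Real.pi - 3*r = -r := by field_simp; ring
      rw [e1, e2, Real.exp_zero] at hcomp
      refine hmono.trans ?_
      rw [hcomp]
      have hexp : 0 < Real.exp (-r) := Real.exp_pos _
      have hpr : 0 < Real.pi/(2*r) := by positivity
      nlinarith
    have hfinal : Real.pi/(2*r) + Real.pi/(2*r) ≤ 2*Real.pi/(1+r) := by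
      rw [← add_div, div_le_div_iff₀ (by positivity) (by linarith)]
      nlinarith
    calc ‖∫ θ in (Real.pi/2)..(3*Real.pi/2), Fc r θ‖
        ≤ _ := h1
      _ = _ := hsplit
      _ ≤ Real.pi/(2*r) + Real.pi/(2*r) := add_le_add hA hB
      _ ≤ 2*Real.pi/(1+r) := hfinal

private lemma master (r : ℝ) (hr : 0 ≤ r) :
    ‖((2*Real.pi)⁻¹ : ℂ) * (∫ θ in (-(Real.pi/2))..(Real.pi/2), Fc r θ) - 1‖ ≤ 1/(1+r) ∧
    ‖((2*Real.pi)⁻¹ : ℂ) * (∫ θ in (Real.pi/2)..(3*Real.pi/2), Fc r θ)‖ ≤ 1/(1+r) := by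
  have hpi := Real.pi_pos
  have h2pi : (0:ℝ) < 2*Real.pi := by linarith
  have hnorm_inv : ‖((2*Real.pi)⁻¹ : ℂ)‖ = (2*Real.pi)⁻¹ := by
    rw [norm_inv]
    have : ((2*Real.pi : ℝ) : ℂ) = ((2:ℂ)*Real.pi) := by push_cast; ring
    rw [← this, Complex.norm_real, Real.norm_of_nonneg h2pi.le]
  have hm := norm_minus r hr
  have hbound : (2*Real.pi)⁻¹ * (2*Real.pi/(1+r)) = 1/(1+r) := by
    field_simp
  constructor
  · have hsum := sum_halves r
    have heq : ((2*Real.pi)⁻¹ : ℂ) * (∫ θ in (-(Real.pi/2))..(Real.pi/2), Fc r θ) - 1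
        = -(((2*Real.pi)⁻¹ : ℂ) * (∫ θ in (Real.pi/2)..(3*Real.pi/2), Fc r θ)) := by
      have h1 : (∫ θ in (-(Real.pi/2))..(Real.pi/2), Fc r θ)
          = (2*Real.pi : ℝ) - (∫ θ in (Real.pi/2)..(3*Real.pi/2), Fc r θ) := by
        rw [← hsum]; ring
      rw [h1]
      have hne : ((2*Real.pi : ℝ) : ℂ) ≠ 0 := by
        simp only [ne_eq, Complex.ofReal_eq_zero]; linarith
      have hpine : ((Real.pi : ℝ) : ℂ) ≠ 0 := Complex.ofReal_ne_zero.2 Real.pi_ne_zero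
      field_simp [hpine]
      push_cast; ring
    rw [heq, norm_neg, mul_comm]
    calc ‖(∫ θ in (Real.pi/2)..(3*Real.pi/2), Fc r θ) * ((2*Real.pi)⁻¹ : ℂ)‖
        = ‖∫ θ in (Real.pi/2)..(3*Real.pi/2), Fc r θ‖ * (2*Real.pi)⁻¹ := by
          rw [norm_mul, hnorm_inv]
      _ ≤ (2*Real.pi/(1+r)) * (2*Real.pi)⁻¹ :=
          mul_le_mul_of_nonneg_right hm (by positivity)
      _ = 1/(1+r) := by rw [mul_comm]; exact hbound
  · calc ‖((2*Real.pi)⁻¹ : ℂ) * (∫ θ in (Real.pi/2)..(3*Real.pi/2), Fc r θ)‖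
        = (2*Real.pi)⁻¹ * ‖∫ θ in (Real.pi/2)..(3*Real.pi/2), Fc r θ‖ := by
          rw [norm_mul, hnorm_inv]
      _ ≤ (2*Real.pi)⁻¹ * (2*Real.pi/(1+r)) :=
          mul_le_mul_of_nonneg_left hm (by positivity)
      _ = 1/(1+r) := hbound

end

/-- With `U₊(x) = (1/(2πi))∫_{C₊} Q^{xs} ds/s` over the right semicircle of `|s| = ω`
(parametrized as `(1/(2π))∫_{-π/2}^{π/2} exp(xω e^{iθ} log Q) dθ`), `U₋` likewise over
the left semicircle, and `R = ω log Q`: `U₊(x) = 1 + O((1+Rx)⁻¹)`, `U₋(x) ≪ (1+Rx)⁻¹`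
for `x ≥ 0`, and `U₋(x) = 1 + O((1+R|x|)⁻¹)`, `U₊(x) ≪ (1+R|x|)⁻¹` for `x ≤ 0`, with
absolute implied constants. -/
theorem stmt_12 : ∃ C > (0 : ℝ), ∀ Q ω : ℝ, 1 < Q → 0 < ω → ∀ x : ℝ,
    (0 ≤ x →
      ‖((2 * Real.pi)⁻¹ : ℂ) * (∫ θ in (-(Real.pi / 2))..(Real.pi / 2),
          Complex.exp (((x * ω * Real.log Q : ℝ) : ℂ) * Complex.exp ((θ : ℂ) * Complex.I)))
        - 1‖ ≤ C / (1 + ω * Real.log Q * x) ∧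
      ‖((2 * Real.pi)⁻¹ : ℂ) * (∫ θ in (Real.pi / 2)..(3 * Real.pi / 2),
          Complex.exp (((x * ω * Real.log Q : ℝ) : ℂ) * Complex.exp ((θ : ℂ) * Complex.I)))‖
        ≤ C / (1 + ω * Real.log Q * x)) ∧
    (x ≤ 0 →
      ‖((2 * Real.pi)⁻¹ : ℂ) * (∫ θ in (Real.pi / 2)..(3 * Real.pi / 2),
          Complex.exp (((x * ω * Real.log Q : ℝ) : ℂ) * Complex.exp ((θ : ℂ) * Complex.I)))
        - 1‖ ≤ C / (1 + ω * Real.log Q * |x|) ∧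
      ‖((2 * Real.pi)⁻¹ : ℂ) * (∫ θ in (-(Real.pi / 2))..(Real.pi / 2),
          Complex.exp (((x * ω * Real.log Q : ℝ) : ℂ) * Complex.exp ((θ : ℂ) * Complex.I)))‖
        ≤ C / (1 + ω * Real.log Q * |x|)) := by
  refine ⟨1, one_pos, ?_⟩
  intro Q ω hQ hω x
  have hlog : 0 < Real.log Q := Real.log_pos hQ
  set r : ℝ := x * ω * Real.log Q with hr_def
  constructor
  · intro hx
    have hr : 0 ≤ r := by positivity
    have hden : 1 + ω * Real.log Q * x = 1 + r := by rw [hr_def]; ring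
    have hmaster := master r hr
    rw [hden]
    exact ⟨by simpa [Fc] using hmaster.1, by simpa [Fc] using hmaster.2⟩
  · intro hx
    have hr : 0 ≤ -r := by
      rw [hr_def]
      have : x * ω * Real.log Q ≤ 0 :=
        mul_nonpos_of_nonpos_of_nonneg (mul_nonpos_of_nonpos_of_nonneg hx hω.le) hlog.le
      linarith
    have hden : 1 + ω * Real.log Q * |x| = 1 + (-r) := by
      rw [hr_def, abs_of_nonpos hx]; ring
    have hmaster := master (-r) hr
    have hshift1 : (∫ θ in (Real.pi/2)..(3*Real.pi/2), Fc r θ)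
        = ∫ θ in (-(Real.pi/2))..(Real.pi/2), Fc (-r) θ := shift_lem r
    have hshift2 : (∫ θ in (-(Real.pi/2))..(Real.pi/2), Fc r θ)
        = ∫ θ in (Real.pi/2)..(3*Real.pi/2), Fc (-r) θ := by
      have := shift_lem (-r)
      rw [neg_neg] at this
      exact this.symm
    rw [hden]
    constructor
    · have := hmaster.1
      rw [← hshift1] at this
      simpa [Fc] using this
    · have := hmaster.2
      rw [← hshift2] at this
      simpa [Fc] using this
end

section
/- Let χ be a real character and define ν, υ by Σν(n)n^{-s} = ζ(s)L(s,χ) and Συ(n)n^{-s} = ζ(s)^{-1}L(s,χ)^{-1}. Then for all n, Σ_{lm=n} |υ(l)| ν(m) ≤ ν(n)τ(n), where τ is the divisor function. -/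
open Complex LSeries Filter Topology Finset ArithmeticFunction
open scoped LSeries.notation


lemma lseries_zero_coeff {f : ℕ → ℂ}
    (hsum : ∀ s : ℂ, 1 < s.re → LSeriesSummable f s)
    (hzero : ∀ s : ℂ, 1 < s.re → LSeries f s = 0) :
    ∀ n : ℕ, 1 ≤ n → f n = 0 := by
  intro n
  induction n using Nat.strong_induction_on with
  | _ n ih =>
  intro hn
  have hn0 : n ≠ 0 := by omega
  have hnpos : (0:ℝ) < n := by positivity
  set F : ℝ → ℕ → ℂ := fun x m => (n : ℂ) ^ (x : ℂ) * term f x m with hF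
  have hcne : ∀ x : ℝ, ((n : ℂ)) ^ (x : ℂ) ≠ 0 := by
    intro x
    simp only [ne_eq, cpow_eq_zero_iff, not_and, Nat.cast_eq_zero]
    exact fun h => absurd h hn0
  have hFnorm : ∀ (x : ℝ) (m : ℕ), m ≠ 0 → ‖F x m‖ = ‖f m‖ * ((n : ℝ) / m) ^ x := by
    intro x m hm
    have hmpos : (0:ℝ) < m := by positivity
    rw [hF]
    simp only
    rw [norm_mul, norm_natCast_cpow_of_pos (by omega), norm_term_eq, if_neg hm,
      Complex.ofReal_re, Real.div_rpow hnpos.le hmpos.le]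
    ring
  -- pointwise limits
  have hlim : ∀ m : ℕ, Tendsto (fun x : ℝ => F x m) atTop
      (𝓝 (if m = n then f n else 0)) := by
    intro m
    rcases eq_or_ne m n with rfl | hmn
    · rw [if_pos rfl]
      have he : ∀ x : ℝ, F x m = f m := by
        intro x
        rw [hF]
        simp only
        rw [term_of_ne_zero hn0, mul_div_cancel₀ _ (hcne x)]
      simpa only [he] using tendsto_const_nhds
    · rw [if_neg hmn]
      rcases eq_or_ne m 0 with rfl | hm0
      · have he : ∀ x : ℝ, F x 0 = 0 := by intro x; rw [hF]; simp [term_zero]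
        simpa only [he] using tendsto_const_nhds
      rcases lt_or_gt_of_ne hmn with hlt | hgt
      · -- m < n : f m = 0 by induction hypothesis
        have hfm : f m = 0 := ih m hlt (by omega)
        have he : ∀ x : ℝ, F x m = 0 := by
          intro x; rw [hF]; simp [term_of_ne_zero hm0, hfm]
        simpa only [he] using tendsto_const_nhds
      · -- m > n : norms tend to zero
        rw [tendsto_zero_iff_norm_tendsto_zero]
        have hb0 : (0:ℝ) < (n : ℝ) / m := by positivity
        have hb1 : (n : ℝ) / m < 1 := by
          rw [div_lt_one (by positivity)]
          exact_mod_cast hgt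
        have := (tendsto_rpow_atTop_of_base_lt_one _ (by linarith) hb1).const_mul ‖f m‖
        rw [mul_zero] at this
        refine this.congr fun x => ?_
        rw [hFnorm x m hm0]
  -- dominated convergence
  have hs2 : LSeriesSummable f 2 := hsum 2 (by norm_num)
  set bound : ℕ → ℝ := fun m => (n:ℝ)^2 * ‖term f 2 m‖ with hbnd
  have hbsum : Summable bound := hs2.norm.mul_left _
  have hbound : ∀ᶠ x : ℝ in atTop, ∀ m, ‖F x m‖ ≤ bound m := by
    filter_upwards [eventually_ge_atTop (2:ℝ)] with x hx m
    rcases eq_or_ne m 0 with rfl | hm0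
    · rw [hF]; simp only [term_zero, mul_zero, norm_zero, hbnd]; positivity
    have hmpos : (0:ℝ) < m := by positivity
    rw [hFnorm x m hm0, hbnd]
    simp only
    rw [norm_term_eq, if_neg hm0]
    have h2re : ((2:ℂ)).re = (2:ℝ) := by norm_num
    rw [h2re]
    rcases le_or_gt (m : ℝ) (n : ℝ) with hmn | hmn
    · -- m ≤ n: use f m = 0 unless m = n
      rcases eq_or_ne m n with rfl | hne
      · rw [div_self hnpos.ne', Real.one_rpow, mul_one]
        rw [mul_div_assoc'] at *
        rw [le_div_iff₀ (by positivity)]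
        ring_nf
        rw [Real.rpow_two]
      · have : f m = 0 := ih m (by exact_mod_cast lt_of_le_of_ne (by exact_mod_cast hmn) hne) (by omega)
        simp [this]
    · -- n < m
      have hb1 : (n:ℝ)/m ≤ 1 := by rw [div_le_one hmpos]; linarith
      have : ((n:ℝ)/m) ^ x ≤ ((n:ℝ)/m) ^ (2:ℝ) :=
        Real.rpow_le_rpow_of_exponent_ge (by positivity) hb1 hx  -- check direction
      calc ‖f m‖ * ((n:ℝ)/m) ^ x ≤ ‖f m‖ * ((n:ℝ)/m) ^ (2:ℝ) := by
              exact mul_le_mul_of_nonneg_left this (norm_nonneg _)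
        _ = (n:ℝ)^2 * (‖f m‖ / m ^ (2:ℝ)) := by
              rw [Real.div_rpow hnpos.le hmpos.le, Real.rpow_two]
              field_simp
  have hT : Tendsto (fun x : ℝ => ∑' m, F x m) atTop (𝓝 (∑' m, if m = n then f n else 0)) :=
    tendsto_tsum_of_dominated_convergence hbsum hlim hbound
  have htsum : (∑' m, if m = n then f n else 0) = f n := tsum_ite_eq n (fun _ => f n)
  have hzero' : ∀ᶠ x : ℝ in atTop, (∑' m, F x m) = 0 := by
    filter_upwards [eventually_gt_atTop (1:ℝ)] with x hx
    have hre : (1:ℝ) < ((x:ℂ)).re := by rwa [Complex.ofReal_re]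
    have : ∑' m, F x m = (n : ℂ) ^ (x : ℂ) * LSeries f x := by
      rw [hF, LSeries]
      exact tsum_mul_left
    rw [this, hzero _ hre, mul_zero]
  have h0 : Tendsto (fun x : ℝ => ∑' m, F x m) atTop (𝓝 0) :=
    Tendsto.congr' (hzero'.mono fun x h => h.symm) tendsto_const_nhds
  rw [htsum] at hT
  exact tendsto_nhds_unique hT h0


section arith

variable {D : ℕ} (χ : DirichletCharacter ℂ D)

/-- real part of χ as an arithmetic function -/
noncomputable def XA : ArithmeticFunction ℝ :=
  ⟨fun n => if n = 0 then 0 else (χ (n : ZMod D)).re, rfl⟩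

noncomputable def NA : ArithmeticFunction ℝ := (zeta : ArithmeticFunction ℕ) * XA χ

noncomputable def UA : ArithmeticFunction ℝ :=
  (moebius : ArithmeticFunction ℤ) * ((XA χ).pmul (moebius : ArithmeticFunction ℤ))

noncomputable def AA : ArithmeticFunction ℝ := ⟨fun n => |UA χ n|, by simp⟩

lemma AA_apply (n : ℕ) : AA χ n = |UA χ n| := rfl

variable (hχreal : ∀ a : ZMod D, (χ a).im = 0)
include hχreal

omit hχreal in
lemma XA_apply {n : ℕ} (hn : n ≠ 0) : XA χ n = (χ (n : ZMod D)).re := by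
  simp [XA, hn]

lemma chi_real (a : ZMod D) : χ a = (((χ a).re : ℝ) : ℂ) := by
  apply Complex.ext
  · simp
  · simp [hχreal a]



lemma XA_mult : (XA χ).IsMultiplicative := by
  constructor
  · simp [XA]
  · intro m n _
    rcases eq_or_ne m 0 with rfl | hm
    · simp [XA]
    rcases eq_or_ne n 0 with rfl | hn
    · simp [XA]
    rw [XA_apply χ (by positivity), XA_apply χ hm, XA_apply χ hn]
    rw [Nat.cast_mul, map_mul]
    rw [chi_real χ hχreal (m : ZMod D), chi_real χ hχreal (n : ZMod D), ← Complex.ofReal_mul]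
    simp

lemma XA_pow {p : ℕ} (hp : p ≠ 0) (k : ℕ) : XA χ (p ^ k) = (XA χ p) ^ k := by
  rw [XA_apply χ (pow_ne_zero k hp), XA_apply χ hp, Nat.cast_pow, map_pow,
    chi_real χ hχreal (p : ZMod D), ← Complex.ofReal_pow, Complex.ofReal_re]
  simp

lemma NA_mult : (NA χ).IsMultiplicative :=
  (isMultiplicative_zeta.natCast).mul (XA_mult χ hχreal)

lemma UA_mult : (UA χ).IsMultiplicative :=
  (isMultiplicative_moebius.intCast).mul
    ((XA_mult χ hχreal).pmul isMultiplicative_moebius.intCast)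

lemma AA_mult : (AA χ).IsMultiplicative := by
  constructor
  · simp [AA_apply, (UA_mult χ hχreal).1]
  · intro m n h
    simp [AA_apply, (UA_mult χ hχreal).2 h, abs_mul]

omit hχreal in
lemma conv_pp {p : ℕ} (hp : p.Prime) (f g : ArithmeticFunction ℝ) (k : ℕ) :
    (f * g) (p ^ k) = ∑ j ∈ Finset.range (k + 1), f (p ^ j) * g (p ^ (k - j)) := by
  rw [ArithmeticFunction.mul_apply,
    Nat.sum_divisorsAntidiagonal (f := fun a b => f a * g b),
    Nat.sum_divisors_prime_pow hp]
  refine Finset.sum_congr rfl fun j hj => ?_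
  have hjk : j ≤ k := Nat.lt_succ_iff.mp (Finset.mem_range.mp hj)
  rw [Nat.pow_div hjk hp.pos]

lemma NA_pp {p : ℕ} (hp : p.Prime) (k : ℕ) :
    NA χ (p ^ k) = ∑ j ∈ Finset.range (k + 1), (XA χ p) ^ j := by
  rw [NA, coe_zeta_mul_apply, Nat.sum_divisors_prime_pow hp]
  exact Finset.sum_congr rfl fun j _ => XA_pow χ hχreal hp.ne_zero j

omit hχreal in
lemma muR_pp {p : ℕ} (hp : p.Prime) (j : ℕ) :
    ((moebius : ArithmeticFunction ℤ) : ArithmeticFunction ℝ) (p ^ j) =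
      if j = 0 then 1 else if j = 1 then -1 else 0 := by
  rcases Nat.eq_zero_or_pos j with rfl | hj
  · simp [isMultiplicative_moebius.intCast.1]
  · rw [intCoe_apply, moebius_apply_prime_pow hp hj.ne']
    rcases eq_or_ne j 1 with rfl | hj1
    · simp
    · simp [hj1, hj.ne']

omit hχreal in
lemma XA_one : XA χ 1 = 1 := by simp [XA]

lemma UA_pp {p : ℕ} (hp : p.Prime) (k : ℕ) :
    UA χ (p ^ k) = if k = 0 then 1 else if k = 1 then -(1 + XA χ p)
      else if k = 2 then XA χ p else 0 := by
  have m0 : ((moebius : ArithmeticFunction ℤ) : ArithmeticFunction ℝ) 1 = 1 := by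
    simpa using muR_pp hp 0
  have m1 : ((moebius : ArithmeticFunction ℤ) : ArithmeticFunction ℝ) p = -1 := by
    simpa using muR_pp hp 1
  have m2 : ∀ j, 2 ≤ j → ((moebius : ArithmeticFunction ℤ) : ArithmeticFunction ℝ) (p ^ j) = 0 := by
    intro j hj
    rw [muR_pp hp j, if_neg (by omega), if_neg (by omega)]
  have h : UA χ (p ^ k) = ∑ j ∈ Finset.range (k + 1),
      ((moebius : ArithmeticFunction ℤ) : ArithmeticFunction ℝ) (p ^ j) *
        (XA χ (p ^ (k - j)) * ((moebius : ArithmeticFunction ℤ) : ArithmeticFunction ℝ)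
          (p ^ (k - j))) := by
    rw [UA, conv_pp hp]
    exact Finset.sum_congr rfl fun j _ => by rw [pmul_apply]
  rw [h]
  match k with
  | 0 => simp [m0, XA_one]
  | 1 =>
    rw [Finset.sum_range_succ, Finset.sum_range_one]
    norm_num [m0, m1, XA_one]
  | 2 =>
    rw [Finset.sum_range_succ, Finset.sum_range_succ, Finset.sum_range_one]
    norm_num [m0, m1, m2 2 le_rfl, XA_one]
  | (n + 3) =>
    rw [if_neg (by omega), if_neg (by omega), if_neg (by omega)]
    apply Finset.sum_eq_zero
    intro j hj
    rcases lt_or_ge j 2 with hj2 | hj2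
    · have : n + 3 - j ≥ 2 := by omega
      rw [m2 _ this, mul_zero, mul_zero]
    · rw [m2 _ hj2, zero_mul]

omit hχreal in
lemma mult_le {f g : ArithmeticFunction ℝ} (hf : f.IsMultiplicative) (hg : g.IsMultiplicative)
    (h : ∀ p k : ℕ, p.Prime → 1 ≤ k → 0 ≤ f (p ^ k) ∧ f (p ^ k) ≤ g (p ^ k))
    {n : ℕ} (hn : n ≠ 0) : f n ≤ g n := by
  rw [hf.multiplicative_factorization f hn, hg.multiplicative_factorization g hn,
    Finsupp.prod, Finsupp.prod]
  have hkey : ∀ p ∈ n.factorization.support,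
      0 ≤ f (p ^ n.factorization p) ∧ f (p ^ n.factorization p) ≤ g (p ^ n.factorization p) := by
    intro p hp
    have hp' : p ∈ n.primeFactors := by rwa [← Nat.support_factorization]
    exact h p _ (Nat.prime_of_mem_primeFactors hp')
      (Nat.one_le_iff_ne_zero.mpr (Finsupp.mem_support_iff.mp hp))
  exact Finset.prod_le_prod (fun p hp => (hkey p hp).1) (fun p hp => (hkey p hp).2)

lemma XA_values (hD : 0 < D) (p : ℕ) (hp : p ≠ 0) :
    XA χ p = 1 ∨ XA χ p = 0 ∨ XA χ p = -1 := by
  haveI : NeZero D := ⟨hD.ne'⟩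
  rw [XA_apply χ hp]
  set a : ZMod D := (p : ZMod D)
  by_cases h : IsUnit a
  · set c := Fintype.card (ZMod D)ˣ with hc
    have hc0 : c ≠ 0 := Fintype.card_ne_zero
    have hu : h.unit ^ c = 1 := pow_card_eq_one
    have hpow : (χ a) ^ c = 1 := by
      have : χ a = χ (h.unit : ZMod D) := by rw [IsUnit.unit_spec]
      rw [this, ← map_pow, ← Units.val_pow_eq_pow_val, hu, Units.val_one, map_one]
    have ht : ((χ a).re : ℝ) ^ c = 1 := by
      have := hpow
      rw [chi_real χ hχreal a, ← Complex.ofReal_pow] at this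
      exact_mod_cast this
    rcases (pow_eq_one_iff_of_ne_zero hc0).mp ht with h1 | h2
    · exact Or.inl h1
    · exact Or.inr (Or.inr h2.1)
  · right; left
    rw [MulChar.map_nonunit χ h]
    simp

lemma pp_bound (hD : 0 < D) {p k : ℕ} (hp : p.Prime) (hk : 1 ≤ k) :
    0 ≤ (AA χ * NA χ) (p ^ k) ∧
      (AA χ * NA χ) (p ^ k) ≤
        ((NA χ).pmul ((sigma 0 : ArithmeticFunction ℕ) : ArithmeticFunction ℝ)) (p ^ k) := by
  set t := XA χ p with hts
  have ht : t = 1 ∨ t = 0 ∨ t = -1 := XA_values χ hχreal hD p hp.ne_zero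
  have hS : ∀ m : ℕ, NA χ (p ^ m) = ∑ j ∈ Finset.range (m + 1), t ^ j := NA_pp χ hχreal hp
  have hSnn : ∀ m : ℕ, 0 ≤ NA χ (p ^ m) := by
    intro m
    rw [hS m]
    rcases ht with h1 | h0 | hm1
    · apply Finset.sum_nonneg; intro j _; rw [h1]; positivity
    · apply Finset.sum_nonneg; intro j _; rw [h0]; positivity
    · rw [hm1, neg_one_geom_sum]; split <;> norm_num
  have hA : ∀ j : ℕ, AA χ (p ^ j) = |UA χ (p ^ j)| := fun j => AA_apply χ _
  have hA0 : AA χ 1 = 1 := (AA_mult χ hχreal).1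
  have hA1 : AA χ p = |1 + t| := by
    have := hA 1
    rw [pow_one] at this
    rw [this]
    have h2 := UA_pp χ hχreal hp 1
    rw [pow_one] at h2
    rw [h2]
    have h3 : (if (1:ℕ) = 0 then (1:ℝ) else if 1 = 1 then -(1 + XA χ p)
        else if 1 = 2 then XA χ p else 0) = -(1 + t) := by norm_num [hts]
    rw [h3, abs_neg]
  have hA2 : AA χ (p ^ 2) = |t| := by rw [hA 2, UA_pp χ hχreal hp 2]; norm_num [hts]
  have hA3 : ∀ j, 3 ≤ j → AA χ (p ^ j) = 0 := by
    intro j hj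
    rw [hA j, UA_pp χ hχreal hp j, if_neg (by omega), if_neg (by omega), if_neg (by omega),
      abs_zero]
  have hconv : (AA χ * NA χ) (p ^ k) =
      ∑ j ∈ Finset.range (k + 1), AA χ (p ^ j) * NA χ (p ^ (k - j)) := conv_pp hp _ _ k
  have hRHS : ((NA χ).pmul ((sigma 0 : ArithmeticFunction ℕ) : ArithmeticFunction ℝ)) (p ^ k)
      = NA χ (p ^ k) * (k + 1 : ℝ) := by
    rw [pmul_apply, natCoe_apply, sigma_zero_apply_prime_pow hp]
    push_cast
    ring
  constructor
  · rw [hconv]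
    apply Finset.sum_nonneg
    intro j _
    exact mul_nonneg (by rw [hA j]; positivity) (hSnn _)
  rw [hconv, hRHS]
  rcases eq_or_lt_of_le hk with h1 | h2
  · -- k = 1
    rw [← h1]
    rw [Finset.sum_range_succ, Finset.sum_range_one]
    norm_num
    rw [hA0, hA1]
    have hN0 : NA χ 1 = 1 := (NA_mult χ hχreal).1
    rw [hN0, one_mul, mul_one]
    have h1t : |1 + t| ≤ 1 + t := by rcases ht with h|h|h <;> rw [h] <;> norm_num
    have hN1 : NA χ p = 1 + t := by
      have := hS 1
      rw [pow_one] at this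
      rw [this, Finset.sum_range_succ, Finset.sum_range_one]
      norm_num
    rw [hN1]
    push_cast
    linarith
  · -- k ≥ 2
    have hk2 : 2 ≤ k := h2
    have hsplit : ∑ j ∈ Finset.range (k + 1), AA χ (p ^ j) * NA χ (p ^ (k - j)) =
        ∑ j ∈ Finset.range 3, AA χ (p ^ j) * NA χ (p ^ (k - j)) := by
      refine (Finset.sum_subset ?_ ?_).symm
      · intro x hx
        simp only [Finset.mem_range] at *
        omega
      · intro x _ hx3
        simp only [Finset.mem_range] at hx3
        rw [hA3 x (by omega), zero_mul]
    rw [hsplit, Finset.sum_range_succ, Finset.sum_range_succ, Finset.sum_range_one,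
      pow_zero, pow_one, Nat.sub_zero, hA0, hA1, hA2, one_mul]
    obtain ⟨m, rfl⟩ : ∃ m, k = m + 2 := ⟨k - 2, by omega⟩
    have e1 : m + 2 - 1 = m + 1 := by omega
    have e2 : m + 2 - 2 = m := by omega
    rw [e1, e2]
    rcases ht with h | h | h
    · have hSv : ∀ l : ℕ, NA χ (p ^ l) = l + 1 := by
        intro l
        rw [hS l, h]
        simp
      rw [hSv, hSv, hSv, h]
      push_cast
      norm_num
      nlinarith [sq_nonneg ((m : ℝ) + 1)]
    · have hSv : ∀ l : ℕ, NA χ (p ^ l) = 1 := by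
        intro l
        rw [hS l, h, geom_sum_eq (by norm_num)]
        norm_num
      rw [hSv, hSv, hSv, h]
      push_cast
      norm_num
      linarith [Nat.cast_nonneg (α := ℝ) m]
    · have hSv : ∀ l : ℕ, NA χ (p ^ l) = if Even (l + 1) then 0 else 1 := by
        intro l
        rw [hS l, h, neg_one_geom_sum]
      rw [hSv (m + 2), hSv (m + 1), hSv m, h]
      norm_num
      rcases Nat.even_or_odd (m + 1) with he | ho
      · have he3 : Even (m + 2 + 1) := by
          have h4 : m + 2 + 1 = (m + 1) + 2 := by omega
          rw [h4]
          exact he.add even_two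
        simp only [if_pos he3, if_pos he]
        norm_num
      · have ho3 : ¬ Even (m + 2 + 1) := by
          have h4 : m + 2 + 1 = (m + 1) + 2 := by omega
          rw [h4]
          exact Nat.not_even_iff_odd.mpr (ho.add_even even_two)
        simp only [if_neg ho3, if_neg (Nat.not_even_iff_odd.mpr ho)]
        push_cast
        linarith [Nat.cast_nonneg (α := ℝ) m]


open Complex LSeries Filter Topology Finset ArithmeticFunction
open scoped LSeries.notation


end arith

lemma nu_identify {D : ℕ} (χ : DirichletCharacter ℂ D) (ν : ℕ → ℝ)
    (hν : ∀ s : ℂ, 1 < s.re → LSeriesSummable (fun n => (ν n : ℂ)) s ∧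
      LSeries (fun n => (ν n : ℂ)) s = riemannZeta s * LSeries (fun n => χ (n : ZMod D)) s) :
    ∀ n : ℕ, 1 ≤ n → (ν n : ℂ) = ∑ d ∈ n.divisors, χ (d : ZMod D) := by
  set g : ℕ → ℂ := (1 : ℕ → ℂ) ⍟ (fun n => χ (n : ZMod D)) with hg
  have hgsum : ∀ s : ℂ, 1 < s.re → LSeriesSummable g s := fun s hs =>
    (LSeriesSummable_one_iff.mpr hs).convolution (χ.LSeriesSummable_of_one_lt_re hs)
  have key : ∀ n : ℕ, 1 ≤ n → (fun m => (ν m : ℂ) - g m) n = 0 := by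
    apply lseries_zero_coeff
    · intro s hs
      exact ((hν s hs).1).sub (hgsum s hs)
    · intro s hs
      have h1 : LSeries (fun m => (ν m : ℂ) - g m) s =
          LSeries (fun n => (ν n : ℂ)) s - LSeries g s :=
        LSeries_sub (hν s hs).1 (hgsum s hs)
      have h2 : LSeries g s = riemannZeta s * LSeries (fun n => χ (n : ZMod D)) s := by
        rw [hg, LSeries_convolution' (LSeriesSummable_one_iff.mpr hs)
          (χ.LSeriesSummable_of_one_lt_re hs), LSeries_one_eq_riemannZeta hs]
      rw [h1, h2, (hν s hs).2, sub_self]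
  intro n hn
  have h := key n hn
  have hgn : g n = ∑ d ∈ n.divisors, χ (d : ZMod D) := by
    rw [hg, LSeries.convolution_def]
    simp only []
    rw [Nat.sum_divisorsAntidiagonal' (f := fun a b => (1 : ℕ → ℂ) a * χ (b : ZMod D))]
    simp
  simp only [sub_eq_zero] at h
  rw [h, hgn]

lemma up_identify {D : ℕ} (χ : DirichletCharacter ℂ D) (υ : ℕ → ℝ)
    (hυ : ∀ s : ℂ, 1 < s.re → LSeriesSummable (fun n => (υ n : ℂ)) s ∧
      LSeries (fun n => (υ n : ℂ)) s =
        (riemannZeta s)⁻¹ * (LSeries (fun n => χ (n : ZMod D)) s)⁻¹) :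
    ∀ n : ℕ, 1 ≤ n → (υ n : ℂ) =
      ∑ p ∈ n.divisorsAntidiagonal, ((moebius p.1 : ℤ) : ℂ) * (χ (p.2 : ZMod D) * ((moebius p.2 : ℤ) : ℂ)) := by
  set g : ℕ → ℂ := (fun n : ℕ => ((moebius n : ℤ) : ℂ)) ⍟ (↗χ * (fun n : ℕ => ((moebius n : ℤ) : ℂ))) with hg
  have hμs : ∀ s : ℂ, 1 < s.re → LSeriesSummable (fun n : ℕ => ((moebius n : ℤ) : ℂ)) s := fun s hs =>
    ArithmeticFunction.LSeriesSummable_moebius_iff.mpr hs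
  have hχμs : ∀ s : ℂ, 1 < s.re → LSeriesSummable (↗χ * (fun n : ℕ => ((moebius n : ℤ) : ℂ))) s := fun s hs =>
    DirichletCharacter.LSeriesSummable_mul χ (hμs s hs)
  have hgsum : ∀ s : ℂ, 1 < s.re → LSeriesSummable g s := fun s hs =>
    (hμs s hs).convolution (hχμs s hs)
  have key : ∀ n : ℕ, 1 ≤ n → (fun m => (υ m : ℂ) - g m) n = 0 := by
    apply lseries_zero_coeff
    · intro s hs
      exact ((hυ s hs).1).sub (hgsum s hs)
    · intro s hs
      have h1 : LSeries (fun m => (υ m : ℂ) - g m) s =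
          LSeries (fun n => (υ n : ℂ)) s - LSeries g s :=
        LSeries_sub (hυ s hs).1 (hgsum s hs)
      have hμval : LSeries (fun n : ℕ => ((moebius n : ℤ) : ℂ)) s = (riemannZeta s)⁻¹ := by
        have := LSeries_one_mul_Lseries_moebius (s := s) hs
        rw [LSeries_one_eq_riemannZeta hs] at this
        exact eq_inv_of_mul_eq_one_left (by rwa [mul_comm])
      have hχμval : LSeries (↗χ * (fun n : ℕ => ((moebius n : ℤ) : ℂ))) s = (LSeries (fun n => χ (n : ZMod D)) s)⁻¹ := by
        have := DirichletCharacter.LSeries.mul_mu_eq_one χ hs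
        exact eq_inv_of_mul_eq_one_left (by rwa [mul_comm])
      have h2 : LSeries g s =
          (riemannZeta s)⁻¹ * (LSeries (fun n => χ (n : ZMod D)) s)⁻¹ := by
        rw [hg, LSeries_convolution' (hμs s hs) (hχμs s hs), hμval, hχμval]
      rw [h1, h2, (hυ s hs).2, sub_self]
  intro n hn
  have h := key n hn
  simp only [sub_eq_zero] at h
  rw [h, hg, LSeries.convolution_def]
  simp


/-- Let `χ` be a real Dirichlet character mod `D` and let `ν, υ` be defined by
`Σ ν(n) n^{-s} = ζ(s) L(s,χ)` and `Σ υ(n) n^{-s} = ζ(s)⁻¹ L(s,χ)⁻¹` (for `Re s > 1`).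
Then for all `n ≥ 1`, `Σ_{lm=n} |υ(l)| ν(m) ≤ ν(n) τ(n)`. -/
theorem stmt_15 (D : ℕ) (hD : 0 < D) (χ : DirichletCharacter ℂ D)
    (hχreal : ∀ a : ZMod D, (χ a).im = 0)
    (ν υ : ℕ → ℝ)
    (hν : ∀ s : ℂ, 1 < s.re → LSeriesSummable (fun n => (ν n : ℂ)) s ∧
      LSeries (fun n => (ν n : ℂ)) s = riemannZeta s * LSeries (fun n => χ (n : ZMod D)) s)
    (hυ : ∀ s : ℂ, 1 < s.re → LSeriesSummable (fun n => (υ n : ℂ)) s ∧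
      LSeries (fun n => (υ n : ℂ)) s =
        (riemannZeta s)⁻¹ * (LSeries (fun n => χ (n : ZMod D)) s)⁻¹) :
    ∀ n : ℕ, 1 ≤ n →
      ∑ p ∈ n.divisorsAntidiagonal, |υ p.1| * ν p.2 ≤ ν n * (n.divisors.card : ℝ) := by
  have hνid := nu_identify χ ν hν
  have hυid := up_identify χ υ hυ
  have hνN : ∀ m : ℕ, 1 ≤ m → ν m = NA χ m := by
    intro m hm
    have h2 : NA χ m = ∑ d ∈ m.divisors, (χ (d : ZMod D)).re := by
      rw [NA, coe_zeta_mul_apply]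
      exact Finset.sum_congr rfl fun d hd => XA_apply χ (Nat.pos_of_mem_divisors hd).ne'
    have h3 : ((ν m : ℝ) : ℂ) = ((NA χ m : ℝ) : ℂ) := by
      rw [hνid m hm, h2]
      push_cast
      exact Finset.sum_congr rfl fun d _ => chi_real χ hχreal _
    exact_mod_cast h3
  have hυU : ∀ m : ℕ, 1 ≤ m → υ m = UA χ m := by
    intro m hm
    have h2 : UA χ m = ∑ p ∈ m.divisorsAntidiagonal,
        ((moebius p.1 : ℤ) : ℝ) * (XA χ p.2 * ((moebius p.2 : ℤ) : ℝ)) := by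
      rw [UA, ArithmeticFunction.mul_apply]
      exact Finset.sum_congr rfl fun p _ => by rw [pmul_apply, intCoe_apply, intCoe_apply]
    have h3 : ((υ m : ℝ) : ℂ) = ((UA χ m : ℝ) : ℂ) := by
      rw [hυid m hm, h2]
      push_cast
      refine Finset.sum_congr rfl fun p hp => ?_
      obtain ⟨-, hp2⟩ := Nat.ne_zero_of_mem_divisorsAntidiagonal hp
      rw [XA_apply χ hp2, ← chi_real χ hχreal _]
    exact_mod_cast h3
  intro n hn
  have hn0 : n ≠ 0 := by omega
  have hLHS : ∑ p ∈ n.divisorsAntidiagonal, |υ p.1| * ν p.2 = (AA χ * NA χ) n := by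
    rw [ArithmeticFunction.mul_apply]
    refine Finset.sum_congr rfl fun p hp => ?_
    obtain ⟨hp1, hp2⟩ := Nat.ne_zero_of_mem_divisorsAntidiagonal hp
    rw [hυU p.1 (Nat.one_le_iff_ne_zero.mpr hp1), hνN p.2 (Nat.one_le_iff_ne_zero.mpr hp2),
      AA_apply]
  have hRHS : ν n * (n.divisors.card : ℝ) =
      ((NA χ).pmul ((sigma 0 : ArithmeticFunction ℕ) : ArithmeticFunction ℝ)) n := by
    rw [pmul_apply, natCoe_apply, sigma_zero_apply, hνN n hn]
  rw [hLHS, hRHS]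
  exact mult_le ((AA_mult χ hχreal).mul (NA_mult χ hχreal))
    ((NA_mult χ hχreal).pmul (isMultiplicative_sigma.natCast))
    (fun p k hp hk => pp_bound χ hχreal hD hp hk) hn0
end

section
/- For a Dirichlet polynomial P(s) = Σ_{n≤N} aₙ n^{-s} and a set S of points ρ = 1/2 + iγ on the critical line with |γ − D| < 1, pairwise separated by at least 2α (i.e. distinct ρ, ρ' ∈ S satisfy |ρ−ρ'| ≥ 2α), one has Σ_{ρ∈S} |P(ρ)|² ≪ ∫_{D−2}^{D+2} ( α^{-1} |P(1/2+it)|² + α |P'(1/2+it)|² ) dt, with an absolute implied constant. -/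
open MeasureTheory

section Aux19
open Finset
open scoped RealInnerProductSpace

noncomputable def Pf19 (N : ℕ) (a : ℕ → ℂ) (t : ℝ) : ℂ :=
  ∑ n ∈ Finset.Icc 1 N, a n * (n : ℂ) ^ (-((1 : ℂ) / 2 + (t : ℂ) * Complex.I))

noncomputable def Qf19 (N : ℕ) (a : ℕ → ℂ) (t : ℝ) : ℂ :=
  ∑ n ∈ Finset.Icc 1 N, a n * (Real.log n : ℂ) * (n : ℂ) ^ (-((1 : ℂ) / 2 + (t : ℂ) * Complex.I))

lemma Pf19_hasDerivAt (N : ℕ) (a : ℕ → ℂ) (t : ℝ) :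
    HasDerivAt (Pf19 N a) (-Complex.I * Qf19 N a t) t := by
  have key : HasDerivAt (Pf19 N a)
      (∑ n ∈ Finset.Icc 1 N, a n * ((n:ℂ) ^ (-((1 : ℂ) / 2 + (t : ℂ) * Complex.I)) *
        Complex.log n * (-Complex.I))) t := by
    apply HasDerivAt.fun_sum
    intro n hn
    have hn1 : 1 ≤ n := (Finset.mem_Icc.mp hn).1
    have hne : (n : ℂ) ≠ 0 := Nat.cast_ne_zero.mpr (by omega)
    have hw : HasDerivAt (fun s : ℂ => -((1 : ℂ) / 2 + s * Complex.I)) (-Complex.I) (t : ℂ) := by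
      have h2 := ((hasDerivAt_id (t:ℂ)).mul_const Complex.I).const_add ((1:ℂ)/2)
      have h3 := h2.neg; rw [one_mul] at h3; exact h3
    exact ((hw.const_cpow (c := (n:ℂ)) (Or.inl hne)).comp_ofReal).const_mul (a n)
  have heq : (∑ n ∈ Finset.Icc 1 N, a n * ((n:ℂ) ^ (-((1 : ℂ) / 2 + (t : ℂ) * Complex.I)) *
        Complex.log n * (-Complex.I))) = -Complex.I * Qf19 N a t := by
    rw [Qf19, Finset.mul_sum]
    apply Finset.sum_congr rfl
    intro n hn
    have : Complex.log (n:ℂ) = (Real.log n : ℂ) := by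
      rw [← Complex.ofReal_natCast, Complex.ofReal_log (Nat.cast_nonneg n)]
    rw [this]; ring
  rw [← heq]; exact key

lemma Pf19_continuous (N : ℕ) (a : ℕ → ℂ) : Continuous (Pf19 N a) :=
  Differentiable.continuous (fun t => (Pf19_hasDerivAt N a t).differentiableAt)

lemma Qf19_continuous (N : ℕ) (a : ℕ → ℂ) : Continuous (Qf19 N a) := by
  have : Qf19 N a = Pf19 N (fun n => a n * (Real.log n : ℂ)) := by
    funext t; simp only [Qf19, Pf19]
  rw [this]; exact Pf19_continuous _ _

noncomputable def fder19 (N : ℕ) (a : ℕ → ℂ) (t : ℝ) : ℝ :=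
  2 * ⟪Pf19 N a t, -Complex.I * Qf19 N a t⟫

lemma fP19_hasDerivAt (N : ℕ) (a : ℕ → ℂ) (t : ℝ) :
    HasDerivAt (fun u => ‖Pf19 N a u‖ ^ 2) (fder19 N a t) t := by
  have h := (Pf19_hasDerivAt N a t).inner ℝ (Pf19_hasDerivAt N a t)
  have heq : (fun u => ⟪Pf19 N a u, Pf19 N a u⟫) = fun u => ‖Pf19 N a u‖ ^ 2 := by
    funext u; exact real_inner_self_eq_norm_sq _
  rw [heq] at h
  refine h.congr_deriv ?_
  rw [fder19, real_inner_comm (Pf19 N a t) (-Complex.I * Qf19 N a t)]; ring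

lemma fder19_continuous (N : ℕ) (a : ℕ → ℂ) : Continuous (fder19 N a) := by
  unfold fder19
  exact continuous_const.mul ((Pf19_continuous N a).inner
    (continuous_const.mul (Qf19_continuous N a)))

noncomputable def gf19 (N : ℕ) (a : ℕ → ℂ) (α t : ℝ) : ℝ :=
  α⁻¹ * ‖Pf19 N a t‖ ^ 2 + α * ‖Qf19 N a t‖ ^ 2

lemma gf19_continuous (N : ℕ) (a : ℕ → ℂ) (α : ℝ) : Continuous (gf19 N a α) := by
  unfold gf19
  exact ((continuous_const.mul (((Pf19_continuous N a).norm).pow 2)).add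
    (continuous_const.mul (((Qf19_continuous N a).norm).pow 2)))

lemma gf19_nonneg (N : ℕ) (a : ℕ → ℂ) {α : ℝ} (hα : 0 < α) (t : ℝ) : 0 ≤ gf19 N a α t := by
  have h1 := sq_nonneg ‖Pf19 N a t‖
  have h2 := sq_nonneg ‖Qf19 N a t‖
  have h3 := inv_pos.mpr hα
  unfold gf19; positivity

lemma fder19_bound (N : ℕ) (a : ℕ → ℂ) {α : ℝ} (hα : 0 < α) (t : ℝ) :
    |fder19 N a t| ≤ gf19 N a α t := by
  have h1 : |fder19 N a t| ≤ 2 * (‖Pf19 N a t‖ * ‖Qf19 N a t‖) := by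
    rw [fder19, abs_mul, abs_two]
    have h := abs_real_inner_le_norm (Pf19 N a t) (-Complex.I * Qf19 N a t)
    have h2 : ‖-Complex.I * Qf19 N a t‖ = ‖Qf19 N a t‖ := by simp
    rw [h2] at h; linarith
  have h2 : 2 * (‖Pf19 N a t‖ * ‖Qf19 N a t‖) ≤ gf19 N a α t := by
    have hq := sq_nonneg (‖Pf19 N a t‖ - α * ‖Qf19 N a t‖)
    have key : α * (2 * (‖Pf19 N a t‖ * ‖Qf19 N a t‖)) ≤ α * gf19 N a α t := by
      have hα' : α * (α⁻¹ * ‖Pf19 N a t‖ ^ 2) = ‖Pf19 N a t‖ ^ 2 := by field_simp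
      rw [gf19, mul_add, hα']; nlinarith
    exact le_of_mul_le_mul_left key hα
  linarith

lemma hP19 (N : ℕ) (a : ℕ → ℂ) {α : ℝ} (hα : 0 < α) (t : ℝ) :
    ‖Pf19 N a t‖ ^ 2 ≤ α * gf19 N a α t := by
  have hα' : α * (α⁻¹ * ‖Pf19 N a t‖ ^ 2) = ‖Pf19 N a t‖ ^ 2 := by field_simp
  have h2 := sq_nonneg ‖Qf19 N a t‖
  rw [gf19, mul_add, hα']
  nlinarith [mul_nonneg hα.le (mul_nonneg hα.le h2)]

lemma stepA19 (N : ℕ) (a : ℕ → ℂ) {α : ℝ} (hα : 0 < α) (γ t : ℝ)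
    (h1 : γ - α ≤ t) (h2 : t ≤ γ + α) :
    ‖Pf19 N a γ‖ ^ 2 ≤ ‖Pf19 N a t‖ ^ 2 + ∫ u in Set.Ioc (γ - α) (γ + α), gf19 N a α u := by
  have hFTC : ∫ u in t..γ, fder19 N a u = ‖Pf19 N a γ‖ ^ 2 - ‖Pf19 N a t‖ ^ 2 :=
    intervalIntegral.integral_eq_sub_of_hasDerivAt (fun u _ => fP19_hasDerivAt N a u)
      ((fder19_continuous N a).intervalIntegrable t γ)
  have habs : |∫ u in t..γ, fder19 N a u| ≤ ∫ u in Set.uIoc t γ, |fder19 N a u| := by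
    simpa [Real.norm_eq_abs] using
      intervalIntegral.norm_integral_le_integral_norm_uIoc (f := fder19 N a) (a := t) (b := γ)
  have hsub : Set.uIoc t γ ⊆ Set.Ioc (γ - α) (γ + α) := by
    rw [Set.uIoc]
    exact Set.Ioc_subset_Ioc (le_min (by linarith) (by linarith))
      (max_le (by linarith) (by linarith))
  have hmono1 : ∫ u in Set.uIoc t γ, |fder19 N a u| ≤ ∫ u in Set.uIoc t γ, gf19 N a α u := by
    apply setIntegral_mono_on
    · exact ((fder19_continuous N a).abs.integrableOn_Ioc)
    · exact ((gf19_continuous N a α).integrableOn_Ioc)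
    · exact measurableSet_uIoc
    · intro x _; exact fder19_bound N a hα x
  have hmono2 : ∫ u in Set.uIoc t γ, gf19 N a α u ≤
      ∫ u in Set.Ioc (γ-α) (γ+α), gf19 N a α u := by
    apply setIntegral_mono_set
    · exact (gf19_continuous N a α).integrableOn_Ioc
    · exact Filter.Eventually.of_forall fun x => gf19_nonneg N a hα x
    · exact Filter.Eventually.of_forall hsub
  have h := abs_le.mp (le_trans habs (le_trans hmono1 hmono2))
  linarith [h.1, h.2, hFTC ▸ h.2]

lemma stepB19 (N : ℕ) (a : ℕ → ℂ) {α : ℝ} (hα : 0 < α) (γ : ℝ) :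
    ‖Pf19 N a γ‖ ^ 2 ≤ (3/2) * ∫ u in Set.Ioc (γ - α) (γ + α), gf19 N a α u := by
  set G := ∫ u in Set.Ioc (γ - α) (γ + α), gf19 N a α u with hG
  have hPcont : Continuous fun t => ‖Pf19 N a t‖ ^ 2 := ((Pf19_continuous N a).norm).pow 2
  have hPint : IntegrableOn (fun t => ‖Pf19 N a t‖ ^ 2) (Set.Ioc (γ-α) (γ+α)) :=
    hPcont.integrableOn_Ioc
  have hCint : IntegrableOn (fun _ : ℝ => G) (Set.Ioc (γ-α) (γ+α)) :=
    (integrableOn_const_iff).mpr (Or.inr (by rw [Real.volume_Ioc]; exact ENNReal.ofReal_lt_top))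
  have hvol : (volume (Set.Ioc (γ - α) (γ + α))).toReal = 2 * α := by
    rw [Real.volume_Ioc, ENNReal.toReal_ofReal (by linarith)]; ring
  have hconst : ∫ _ in Set.Ioc (γ - α) (γ + α), ‖Pf19 N a γ‖ ^ 2 = 2 * α * ‖Pf19 N a γ‖ ^ 2 := by
    rw [setIntegral_const, measureReal_def, hvol, smul_eq_mul]
  have hGconst : ∫ _ in Set.Ioc (γ - α) (γ + α), G = 2 * α * G := by
    rw [setIntegral_const, measureReal_def, hvol, smul_eq_mul]
  have hint1 : ∫ _ in Set.Ioc (γ - α) (γ + α), ‖Pf19 N a γ‖ ^ 2 ≤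
      ∫ t in Set.Ioc (γ - α) (γ + α), (‖Pf19 N a t‖ ^ 2 + G) := by
    apply setIntegral_mono_on
    · exact (integrableOn_const_iff).mpr (Or.inr (by rw [Real.volume_Ioc]; exact ENNReal.ofReal_lt_top))
    · exact hPint.add hCint
    · exact measurableSet_Ioc
    · intro t ht; exact stepA19 N a hα γ t (le_of_lt ht.1) ht.2
  have hsplit : ∫ t in Set.Ioc (γ - α) (γ + α), (‖Pf19 N a t‖ ^ 2 + G) =
      (∫ t in Set.Ioc (γ - α) (γ + α), ‖Pf19 N a t‖ ^ 2) + 2 * α * G := by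
    rw [integral_add hPint hCint, hGconst]
  have hint2 : ∫ t in Set.Ioc (γ - α) (γ + α), ‖Pf19 N a t‖ ^ 2 ≤ α * G := by
    have h : ∫ t in Set.Ioc (γ - α) (γ + α), ‖Pf19 N a t‖ ^ 2 ≤
        ∫ t in Set.Ioc (γ - α) (γ + α), α * gf19 N a α t := by
      apply setIntegral_mono_on hPint ((continuous_const.mul (gf19_continuous N a α)).integrableOn_Ioc)
        measurableSet_Ioc
      intro t _; exact hP19 N a hα t
    rwa [MeasureTheory.integral_const_mul] at h
  have h2a : 2 * α * ‖Pf19 N a γ‖ ^ 2 ≤ 3 * α * G := by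
    rw [← hconst]
    calc _ ≤ _ := hint1
    _ = _ := hsplit
    _ ≤ α * G + 2 * α * G := by linarith
    _ = 3 * α * G := by ring
  nlinarith

end Aux19

/-- Hybrid mean-value bound: for a Dirichlet polynomial `P(s) = Σ_{n≤N} aₙ n^{-s}` and a
set `S` of ordinates `γ` with `|γ − D| < 1` whose points `ρ = 1/2 + iγ` are pairwise
separated by at least `2α` (`0 < α < 1`),
`Σ_{ρ∈S} |P(ρ)|² ≪ ∫_{D−2}^{D+2} (α⁻¹ |P(1/2+it)|² + α |P'(1/2+it)|²) dt`,
with an absolute implied constant. -/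
theorem stmt_19 : ∃ C > (0 : ℝ),
    ∀ (N : ℕ) (a : ℕ → ℂ) (α D : ℝ) (S : Finset ℝ),
    0 < α → α < 1 →
    (∀ γ ∈ S, |γ - D| < 1) →
    (∀ γ ∈ S, ∀ γ' ∈ S, γ ≠ γ' → 2 * α ≤ |γ - γ'|) →
    ∑ γ ∈ S,
        ‖∑ n ∈ Finset.Icc 1 N, a n * (n : ℂ) ^ (-((1 : ℂ) / 2 + (γ : ℂ) * Complex.I))‖ ^ 2
      ≤ C * ∫ t in (D - 2)..(D + 2),
          (α⁻¹ * ‖∑ n ∈ Finset.Icc 1 N,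
              a n * (n : ℂ) ^ (-((1 : ℂ) / 2 + (t : ℂ) * Complex.I))‖ ^ 2
            + α * ‖∑ n ∈ Finset.Icc 1 N,
              a n * (Real.log n : ℂ) * (n : ℂ) ^ (-((1 : ℂ) / 2 + (t : ℂ) * Complex.I))‖ ^ 2) := by
  refine ⟨3/2, by norm_num, ?_⟩
  intro N a α D S hα hα1 hD hsep
  show ∑ γ ∈ S, ‖Pf19 N a γ‖ ^ 2 ≤ (3/2) * ∫ t in (D - 2)..(D + 2), gf19 N a α t
  -- the interval integral as a set integral
  have hI : (∫ t in (D - 2)..(D + 2), gf19 N a α t) =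
      ∫ t in Set.Ioc (D - 2) (D + 2), gf19 N a α t := by
    rw [intervalIntegral.integral_of_le (by linarith)]
  -- disjointness of the intervals
  have hdisj : Set.Pairwise (↑S) (Function.onFun Disjoint
      (fun γ => Set.Ioc (γ - α) (γ + α))) := by
    intro γ hγ γ' hγ' hne
    have h := hsep γ hγ γ' hγ' hne
    rw [Function.onFun, Set.Ioc_disjoint_Ioc]
    rcases le_abs.mp h with h' | h'
    · exact le_trans (min_le_right _ _) (le_trans (by linarith) (le_max_left _ _))
    · exact le_trans (min_le_left _ _) (le_trans (by linarith) (le_max_right _ _))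
  -- union of intervals is inside [D-2, D+2]
  have hsubU : (⋃ γ ∈ S, Set.Ioc (γ - α) (γ + α)) ⊆ Set.Ioc (D - 2) (D + 2) := by
    intro x hx
    simp only [Set.mem_iUnion] at hx
    obtain ⟨γ, hγ, hxmem⟩ := hx
    have hDγ := abs_lt.mp (hD γ hγ)
    exact ⟨by cases hxmem; linarith, by cases hxmem; linarith⟩
  have hbiUnion : ∑ γ ∈ S, ∫ u in Set.Ioc (γ - α) (γ + α), gf19 N a α u =
      ∫ u in ⋃ γ ∈ S, Set.Ioc (γ - α) (γ + α), gf19 N a α u :=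
    (MeasureTheory.integral_biUnion_finset S (fun _ _ => measurableSet_Ioc) hdisj
      (fun _ _ => (gf19_continuous N a α).integrableOn_Ioc)).symm
  have hmono : ∫ u in ⋃ γ ∈ S, Set.Ioc (γ - α) (γ + α), gf19 N a α u ≤
      ∫ u in Set.Ioc (D - 2) (D + 2), gf19 N a α u := by
    apply setIntegral_mono_set
    · exact (gf19_continuous N a α).integrableOn_Ioc
    · exact Filter.Eventually.of_forall fun x => gf19_nonneg N a hα x
    · exact Filter.Eventually.of_forall hsubU
  calc ∑ γ ∈ S, ‖Pf19 N a γ‖ ^ 2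
      ≤ ∑ γ ∈ S, (3/2) * ∫ u in Set.Ioc (γ - α) (γ + α), gf19 N a α u :=
        Finset.sum_le_sum fun γ _ => stepB19 N a hα γ
    _ = (3/2) * ∑ γ ∈ S, ∫ u in Set.Ioc (γ - α) (γ + α), gf19 N a α u := by
        rw [Finset.mul_sum]
    _ ≤ (3/2) * ∫ u in Set.Ioc (D - 2) (D + 2), gf19 N a α u := by
        rw [hbiUnion]; linarith
    _ = (3/2) * ∫ t in (D - 2)..(D + 2), gf19 N a α t := by rw [hI]
end
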